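/- arXiv:1312.7412 — 13 statements merged into one kernel-verified Lean document; each statement's English description precedes it below -/
import Mathlib

section
/- Let n ≥ 2, let L ∈ ℝ^{n×n} be the weighted Laplacian of nonnegative weights w_{ij}, and let E, F ∈ ℝ^{n×(n−1)} be the incidence and weighted incidence matrices of the underlying undirected graph. Assume the underlying undirected graph is a spanning tree, i.e., it has n − 1 edges and rank E = n − 1. Then rank F = n − 1 if and only if rank L = n − 1. -/
open Matrix

/-- for a weighted Laplacian whose underlying undirected graph is a
spanning tree (so it has `n - 1` edges and `rank E = n - 1`), the weighted incidence
matrix `F` has rank `n - 1` if and only if `rank L = n - 1`. -/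
theorem weighted_incidence_rank_iff
    (n : ℕ) (hn : 2 ≤ n)
    (w : Fin n → Fin n → ℝ)
    (hw : ∀ i j, 0 ≤ w i j) (hwdiag : ∀ i, w i i = 0)
    (L : Matrix (Fin n) (Fin n) ℝ)
    (hL : ∀ i j, L i j =
      if i = j then ∑ l ∈ Finset.univ.erase i, w i l else - w i j)
    -- enumeration of the n - 1 edges of the underlying undirected graph
    (ed : Fin (n-1) → Fin n × Fin n)
    (hloop : ∀ l, (ed l).1 ≠ (ed l).2)
    (hedge : ∀ l, 0 < w (ed l).1 (ed l).2 + w (ed l).2 (ed l).1)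
    (hcover : ∀ i j : Fin n, i ≠ j → 0 < w i j + w j i →
      ∃ l, ed l = (i, j) ∨ ed l = (j, i))
    (huniq : ∀ l l' : Fin (n-1),
      (ed l = ed l' ∨ ed l = ((ed l').2, (ed l').1)) → l = l')
    (E : Matrix (Fin n) (Fin (n-1)) ℝ)
    (hE : ∀ i l, E i l =
      (if i = (ed l).1 then (1:ℝ) else 0) - (if i = (ed l).2 then (1:ℝ) else 0))
    (F : Matrix (Fin n) (Fin (n-1)) ℝ)
    (hF : ∀ i l, F i l =
      w (ed l).1 (ed l).2 * (if i = (ed l).1 then (1:ℝ) else 0)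
        - w (ed l).2 (ed l).1 * (if i = (ed l).2 then (1:ℝ) else 0))
    -- the underlying undirected graph is a spanning tree
    (hrankE : E.rank = n - 1) :
    F.rank = n - 1 ↔ L.rank = n - 1 := by
  classical
  -- Step 1: the factorization L = F * Eᵀ
  have hLFE : L = F * Eᵀ := by
    ext i j
    rw [Matrix.mul_apply, hL]
    by_cases hij : i = j
    · subst hij
      rw [if_pos rfl]
      -- diagonal case
      have hterm : ∀ l, F i l * Eᵀ l i =
          if i = (ed l).1 then w (ed l).1 (ed l).2
          else if i = (ed l).2 then w (ed l).2 (ed l).1 else 0 := by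
        intro l
        rw [transpose_apply, hF, hE]
        by_cases h1 : i = (ed l).1
        · rw [if_pos h1, if_neg (h1 ▸ hloop l), if_pos h1]; ring
        · rw [if_neg h1, if_neg h1]
          by_cases h2 : i = (ed l).2
          · rw [if_pos h2, if_pos h2]; ring
          · rw [if_neg h2, if_neg h2]; ring
      simp only [hterm]
      have key : ∑ k ∈ (Finset.univ.erase i).filter (fun k => 0 < w i k + w k i), w i k
          = ∑ l ∈ Finset.univ.filter (fun l => i = (ed l).1 ∨ i = (ed l).2),
            (if i = (ed l).1 then w (ed l).1 (ed l).2
              else if i = (ed l).2 then w (ed l).2 (ed l).1 else 0) := by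
        symm
        refine Finset.sum_bij (fun l _ => if i = (ed l).1 then (ed l).2 else (ed l).1)
          ?_ ?_ ?_ ?_
        · intro l hl
          simp only [Finset.mem_filter, Finset.mem_univ, true_and] at hl
          simp only [Finset.mem_filter, Finset.mem_erase, Finset.mem_univ, and_true, true_and]
          by_cases h1 : i = (ed l).1
          · rw [if_pos h1]
            refine ⟨fun hh => hloop l (h1 ▸ hh ▸ rfl), ?_⟩
            rw [h1]; exact hedge l
          · have h2 : i = (ed l).2 := hl.resolve_left h1
            rw [if_neg h1]
            refine ⟨fun hh => hloop l (hh.trans h2), ?_⟩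
            rw [h2]; have := hedge l; linarith
        · intro l hl l' hl' heq
          simp only [Finset.mem_filter, Finset.mem_univ, true_and] at hl hl'
          apply huniq
          by_cases h1 : i = (ed l).1 <;> by_cases h1' : i = (ed l').1
          · rw [if_pos h1, if_pos h1'] at heq
            exact Or.inl (Prod.ext_iff.mpr ⟨h1.symm.trans h1', heq⟩)
          · have h2' : i = (ed l').2 := hl'.resolve_left h1'
            rw [if_pos h1, if_neg h1'] at heq
            exact Or.inr (Prod.ext_iff.mpr ⟨h1.symm.trans h2', heq⟩)
          · have h2 : i = (ed l).2 := hl.resolve_left h1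
            rw [if_neg h1, if_pos h1'] at heq
            exact Or.inr (Prod.ext_iff.mpr ⟨heq, h2.symm.trans h1'⟩)
          · have h2 : i = (ed l).2 := hl.resolve_left h1
            have h2' : i = (ed l').2 := hl'.resolve_left h1'
            rw [if_neg h1, if_neg h1'] at heq
            exact Or.inl (Prod.ext_iff.mpr ⟨heq, h2.symm.trans h2'⟩)
        · intro k hk
          obtain ⟨hk1, hkpos⟩ := Finset.mem_filter.mp hk
          have hki : k ≠ i := (Finset.mem_erase.mp hk1).1
          obtain ⟨l, hl⟩ := hcover i k (Ne.symm hki) hkpos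
          rcases hl with h | h
          · have h1 : i = (ed l).1 := by rw [h]
            refine ⟨l, by simp [h1], ?_⟩
            rw [if_pos h1, h]
          · have h2 : i = (ed l).2 := by rw [h]
            have h1 : ¬ i = (ed l).1 := by rw [h]; exact Ne.symm hki
            refine ⟨l, by simp [h1, h2], ?_⟩
            rw [if_neg h1, h]
        · intro l hl
          simp only [Finset.mem_filter, Finset.mem_univ, true_and] at hl
          by_cases h1 : i = (ed l).1
          · rw [if_pos h1, if_pos h1, ← h1]
          · have h2 : i = (ed l).2 := hl.resolve_left h1
            rw [if_neg h1, if_neg h1, if_pos h2, ← h2]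
      rw [show ∑ k ∈ Finset.univ.erase i, w i k
          = ∑ k ∈ (Finset.univ.erase i).filter (fun k => 0 < w i k + w k i), w i k by
        refine (Finset.sum_subset (Finset.filter_subset _ _) ?_).symm
        intro k hk hk2
        have : ¬ 0 < w i k + w k i := fun hp => hk2 (Finset.mem_filter.mpr ⟨hk, hp⟩)
        nlinarith [hw i k, hw k i]]
      rw [key, Finset.sum_filter]
      apply Finset.sum_congr rfl
      intro l _
      by_cases h1 : i = (ed l).1
      · rw [if_pos (Or.inl h1)]
      · by_cases h2 : i = (ed l).2
        · rw [if_pos (Or.inr h2)]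
        · rw [if_neg (by tauto), if_neg h1, if_neg h2]
    · rw [if_neg hij]
      -- off-diagonal case
      have hterm : ∀ l, F i l * Eᵀ l j =
          if ed l = (i, j) ∨ ed l = (j, i) then -w i j else 0 := by
        intro l
        rw [transpose_apply, hF, hE]
        have e1 : ed l = (i, j) ↔ i = (ed l).1 ∧ j = (ed l).2 := by
          rw [Prod.ext_iff]; constructor <;> exact fun ⟨a, b⟩ => ⟨a.symm, b.symm⟩
        have e2 : ed l = (j, i) ↔ j = (ed l).1 ∧ i = (ed l).2 := by
          rw [Prod.ext_iff]; constructor <;> exact fun ⟨a, b⟩ => ⟨a.symm, b.symm⟩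
        by_cases h1 : i = (ed l).1
        · have h2 : ¬ i = (ed l).2 := fun hh => hloop l (h1 ▸ hh ▸ rfl)
          have h3 : ¬ j = (ed l).1 := fun hh => hij (h1.trans hh.symm)
          by_cases h4 : j = (ed l).2
          · rw [if_pos (Or.inl (e1.mpr ⟨h1, h4⟩)), if_pos h1, if_neg h2, if_neg h3,
              if_pos h4, ← h1, ← h4]; ring
          · have hns : ¬ (ed l = (i, j) ∨ ed l = (j, i)) := by rw [e1, e2]; tauto
            rw [if_neg hns, if_pos h1, if_neg h2, if_neg h3, if_neg h4]; ring
        · by_cases h2 : i = (ed l).2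
          · have h4 : ¬ j = (ed l).2 := fun hh => hij (h2.trans hh.symm)
            by_cases h3 : j = (ed l).1
            · rw [if_pos (Or.inr (e2.mpr ⟨h3, h2⟩)), if_neg h1, if_pos h2, if_pos h3,
                if_neg h4, ← h2, ← h3]; ring
            · have hns : ¬ (ed l = (i, j) ∨ ed l = (j, i)) := by rw [e1, e2]; tauto
              rw [if_neg hns, if_neg h1, if_pos h2, if_neg h3, if_neg h4]; ring
          · have hns : ¬ (ed l = (i, j) ∨ ed l = (j, i)) := by rw [e1, e2]; tauto
            rw [if_neg hns, if_neg h1, if_neg h2]; ring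
      simp only [hterm]
      by_cases hpos : 0 < w i j + w j i
      · obtain ⟨l0, hl0⟩ := hcover i j hij hpos
        rw [Finset.sum_eq_single l0]
        · rw [if_pos hl0]
        · intro l _ hne
          rw [if_neg]
          intro hl
          apply hne
          apply huniq
          rcases hl with h | h <;> rcases hl0 with h0 | h0 <;> simp [h, h0]
        · intro h; exact absurd (Finset.mem_univ l0) h
      · have hwij : w i j = 0 := le_antisymm (by nlinarith [hw i j, hw j i]) (hw i j)
        rw [hwij]
        simp
  -- Step 2: Eᵀ has full row rank, hence surjective, hence rank L = rank F
  have hsurj : LinearMap.range (Eᵀ.mulVecLin) = ⊤ := by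
    apply Submodule.eq_top_of_finrank_eq
    have hET : (Eᵀ).rank = n - 1 := by rw [Matrix.rank_transpose]; exact hrankE
    rw [Matrix.rank] at hET
    rw [hET]
    simp [Module.finrank_pi]
  have hLF : L.rank = F.rank := by
    rw [hLFE, Matrix.rank, Matrix.mulVecLin_mul,
      LinearMap.range_comp_of_range_eq_top _ hsurj, ← Matrix.rank]
  rw [hLF]
end

section
/- Let n ≥ 2, let E ∈ ℝ^{n×(n−1)} satisfy Eᵀ𝟙 = 0 and rank E = n − 1, let F ∈ ℝ^{n×(n−1)} be such that EᵀF is invertible, and let ν ∈ ℝ^n satisfy νᵀ(FEᵀ) = 0 and νᵀ𝟙 = 1. Then the matrix T ∈ ℝ^{n×n} whose first row is νᵀ and whose remaining n−1 rows form Eᵀ is invertible, its inverse is the matrix whose first column is 𝟙 and whose remaining columns form F(EᵀF)^{−1}, and T (FEᵀ) T^{−1} is the block-diagonal matrix diag(0, EᵀF) (a zero scalar block followed by the (n−1)×(n−1) block EᵀF). -/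
open Matrix

/-- the matrix `T` with first row `νᵀ` and remaining rows `Eᵀ` is invertible
with inverse the matrix with first column `𝟙` and remaining columns `F (EᵀF)⁻¹`, and
`T (F Eᵀ) T⁻¹` is the block-diagonal matrix `diag(0, EᵀF)`. -/
theorem laplacian_block_diagonalization
    (n : ℕ) (hn : 2 ≤ n)
    (E F : Matrix (Fin n) (Fin (n-1)) ℝ)
    (hE1 : Eᵀ *ᵥ (fun _ => (1:ℝ)) = 0)
    (hrankE : E.rank = n - 1)
    (hinv : IsUnit (Eᵀ * F).det)
    (ν : Fin n → ℝ)
    (hν : ν ᵥ* (F * Eᵀ) = 0)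
    (hν1 : ν ⬝ᵥ (fun _ => (1:ℝ)) = 1)
    (T : Matrix (Fin 1 ⊕ Fin (n-1)) (Fin n) ℝ)
    (hT : T = Matrix.fromRows (Matrix.of fun (_ : Fin 1) j => ν j) Eᵀ)
    (Tinv : Matrix (Fin n) (Fin 1 ⊕ Fin (n-1)) ℝ)
    (hTinv : Tinv = Matrix.fromCols
      (Matrix.of fun (_ : Fin n) (_ : Fin 1) => (1:ℝ)) (F * (Eᵀ * F)⁻¹)) :
    T * Tinv = 1 ∧ Tinv * T = 1 ∧
    T * (F * Eᵀ) * Tinv = Matrix.fromBlocks 0 0 0 (Eᵀ * F) := by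
  -- ν is orthogonal to the columns of F
  have hFν : ν ᵥ* F = 0 := by
    have h0 : E *ᵥ (ν ᵥ* F) = 0 := by
      rw [← Matrix.vecMul_transpose, Matrix.vecMul_vecMul, hν]
    have hinj : Function.Injective E.mulVecLin := by
      rw [← LinearMap.ker_eq_bot]
      have hrn := E.mulVecLin.finrank_range_add_finrank_ker
      rw [show Module.finrank ℝ (LinearMap.range E.mulVecLin) = E.rank from rfl, hrankE,
        Module.finrank_pi, Fintype.card_fin] at hrn
      have hker : Module.finrank ℝ (LinearMap.ker E.mulVecLin) = 0 := by omega
      exact Submodule.finrank_eq_zero.mp hker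
    have := hinj (a₁ := ν ᵥ* F) (a₂ := 0) (by simpa using h0)
    simpa using this
  have hEF1 : Eᵀ * (F * (Eᵀ * F)⁻¹) = 1 := by
    rw [← Matrix.mul_assoc]
    exact Matrix.mul_nonsing_inv _ hinv
  -- the four blocks of T * Tinv
  have hrow0 : (Matrix.of fun (_ : Fin 1) j => ν j) * (F * (Eᵀ * F)⁻¹) = 0 := by
    ext i j
    have : (ν ᵥ* (F * (Eᵀ * F)⁻¹)) j = 0 := by
      rw [← Matrix.vecMul_vecMul, hFν, Matrix.zero_vecMul]
      rfl
    simpa [Matrix.mul_apply, Matrix.vecMul, dotProduct] using this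
  have hrow1 : (Matrix.of fun (_ : Fin 1) j => ν j) *
      (Matrix.of fun (_ : Fin n) (_ : Fin 1) => (1:ℝ)) = 1 := by
    ext i j
    have hi : i = 0 := Subsingleton.elim _ _
    have hj : j = 0 := Subsingleton.elim _ _
    subst hi; subst hj
    simpa [Matrix.mul_apply, dotProduct, Matrix.one_apply] using hν1
  have hE0 : Eᵀ * (Matrix.of fun (_ : Fin n) (_ : Fin 1) => (1:ℝ)) = 0 := by
    ext i j
    have := congrFun hE1 i
    simpa [Matrix.mul_apply, Matrix.mulVec, dotProduct] using this
  have hTT : T * Tinv = 1 := by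
    rw [hT, hTinv, Matrix.fromRows_mul_fromCols, hrow0, hrow1, hE0, hEF1,
      ← Matrix.fromBlocks_one]
  refine ⟨hTT, ?_, ?_⟩
  · -- right inverse from left inverse via an equivalence of index types
    have e : Fin 1 ⊕ Fin (n-1) ≃ Fin n :=
      finSumFinEquiv.trans (finCongr (by omega))
    exact (Matrix.mul_eq_one_comm_of_equiv e).mp hTT
  · have key : F * Eᵀ * (Matrix.fromCols
        (Matrix.of fun (_ : Fin n) (_ : Fin 1) => (1:ℝ)) (F * (Eᵀ * F)⁻¹))
        = Matrix.fromCols 0 F := by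
      rw [Matrix.mul_assoc, Matrix.mul_fromCols, hE0, hEF1, Matrix.mul_fromCols,
        Matrix.mul_zero, Matrix.mul_one]
    have hrowF : (Matrix.of fun (_ : Fin 1) j => ν j) * F = 0 := by
      ext i j
      have : (ν ᵥ* F) j = 0 := congrFun hFν j
      simpa [Matrix.mul_apply, Matrix.vecMul, dotProduct] using this
    rw [hT, hTinv, Matrix.mul_assoc, key, Matrix.fromRows_mul_fromCols, hrowF,
      Matrix.mul_zero, Matrix.mul_zero]
end

section
/- Let n ≥ 2, let E, F ∈ ℝ^{n×m}, set L = FEᵀ and L_e = EᵀF, and let A ∈ ℝ^{k×k}, B ∈ ℝ^{k×p}, C ∈ ℝ^{p×k}, G ∈ ℝ^{n×q}. Suppose x : ℝ → ℝ^{nk} and u : ℝ → ℝ^{q} are such that x is differentiable and ẋ(t) = (I_n ⊗ A − L ⊗ BC) x(t) + (G ⊗ B) u(t) for all t. Then x_e := (Eᵀ ⊗ I_k) x is differentiable and satisfies the edge dynamics ẋ_e(t) = (I_m ⊗ A − L_e ⊗ BC) x_e(t) + (EᵀG ⊗ B) u(t) for all t. -/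
open Matrix Kronecker

/-- Derivative pushes through a fixed matrix multiplication. -/
lemma hasDerivAt_mulVec {ι κ : Type*} [Fintype ι] [Fintype κ] [DecidableEq ι] [DecidableEq κ]
    (M : Matrix κ ι ℝ) {x : ℝ → ι → ℝ} {v : ι → ℝ} {t : ℝ}
    (hx : HasDerivAt x v t) :
    HasDerivAt (fun s => M *ᵥ x s) (M *ᵥ v) t := by
  have h := ((LinearMap.toContinuousLinearMap (Matrix.mulVecLin M)).hasFDerivAt.comp t
    hx.hasFDerivAt).hasDerivAt
  simp at h
  exact h

/-- if `x` satisfies the networked dynamics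
`ẋ = (I ⊗ A - L ⊗ BC) x + (G ⊗ B) u` with `L = F Eᵀ`, then the edge state
`x_e = (Eᵀ ⊗ I) x` satisfies the edge dynamics
`ẋ_e = (I ⊗ A - L_e ⊗ BC) x_e + (EᵀG ⊗ B) u` with `L_e = Eᵀ F`. -/
theorem edge_dynamics
    (n m k p q : ℕ) (hn : 2 ≤ n)
    (E F : Matrix (Fin n) (Fin m) ℝ)
    (L : Matrix (Fin n) (Fin n) ℝ) (hL : L = F * Eᵀ)
    (Le : Matrix (Fin m) (Fin m) ℝ) (hLe : Le = Eᵀ * F)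
    (A : Matrix (Fin k) (Fin k) ℝ) (B : Matrix (Fin k) (Fin p) ℝ)
    (C : Matrix (Fin p) (Fin k) ℝ) (G : Matrix (Fin n) (Fin q) ℝ)
    (x : ℝ → (Fin n × Fin k) → ℝ) (u : ℝ → (Fin q × Fin p) → ℝ)
    (hx : ∀ t : ℝ, HasDerivAt x
      ((((1 : Matrix (Fin n) (Fin n) ℝ) ⊗ₖ A - L ⊗ₖ (B * C)) *ᵥ x t)
        + (G ⊗ₖ B) *ᵥ u t) t) :
    ∀ t : ℝ, HasDerivAt (fun s => (Eᵀ ⊗ₖ (1 : Matrix (Fin k) (Fin k) ℝ)) *ᵥ x s)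
      ((((1 : Matrix (Fin m) (Fin m) ℝ) ⊗ₖ A - Le ⊗ₖ (B * C)) *ᵥ
          ((Eᵀ ⊗ₖ (1 : Matrix (Fin k) (Fin k) ℝ)) *ᵥ x t))
        + ((Eᵀ * G) ⊗ₖ B) *ᵥ u t) t := by
  intro t
  have h := hasDerivAt_mulVec (Eᵀ ⊗ₖ (1 : Matrix (Fin k) (Fin k) ℝ)) (hx t)
  convert h using 1
  have key : ((1 : Matrix (Fin m) (Fin m) ℝ) ⊗ₖ A - Le ⊗ₖ (B * C)) *
      (Eᵀ ⊗ₖ (1 : Matrix (Fin k) (Fin k) ℝ)) =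
      (Eᵀ ⊗ₖ (1 : Matrix (Fin k) (Fin k) ℝ)) *
      ((1 : Matrix (Fin n) (Fin n) ℝ) ⊗ₖ A - L ⊗ₖ (B * C)) := by
    rw [Matrix.sub_mul, Matrix.mul_sub, ← mul_kronecker_mul, ← mul_kronecker_mul,
      ← mul_kronecker_mul, ← mul_kronecker_mul]
    simp [hL, hLe, Matrix.mul_assoc]
  have key2 : ((Eᵀ * G) ⊗ₖ B) =
      (Eᵀ ⊗ₖ (1 : Matrix (Fin k) (Fin k) ℝ)) * (G ⊗ₖ B) := by
    rw [← mul_kronecker_mul, Matrix.one_mul]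
  rw [Matrix.mulVec_mulVec, key, ← Matrix.mulVec_mulVec, key2, ← Matrix.mulVec_mulVec,
    ← Matrix.mulVec_add]
end

section
/- Let Q ∈ ℝ^{k×k} be symmetric positive definite, J ∈ ℝ^{k×k} skew-symmetric, R ∈ ℝ^{k×k} symmetric positive semidefinite, B ∈ ℝ^{k×m₀}; set A = (J − R)Q and C = BᵀQ. Let L_e ∈ ℝ^{q×q} and K ∈ ℝ^{q×q} be arbitrary. Then (I_q ⊗ A − L_e ⊗ BC)ᵀ (K ⊗ Q) + (K ⊗ Q)(I_q ⊗ A − L_e ⊗ BC) = −2 K ⊗ (QRQ) − (L_eᵀK + K L_e) ⊗ (CᵀC). -/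
open Matrix Kronecker

/-- the key Lyapunov identity for port-Hamiltonian subsystems:
`(I ⊗ A - L_e ⊗ BC)ᵀ (K ⊗ Q) + (K ⊗ Q)(I ⊗ A - L_e ⊗ BC)
  = -2 K ⊗ (QRQ) - (L_eᵀK + K L_e) ⊗ (CᵀC)`. -/
theorem lyapunov_identity
    (k m₀ q : ℕ)
    (Q J R : Matrix (Fin k) (Fin k) ℝ) (B : Matrix (Fin k) (Fin m₀) ℝ)
    (hQ : Q.PosDef) (hQsymm : Qᵀ = Q)
    (hJ : Jᵀ = -J) (hR : R.PosSemidef)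
    (A : Matrix (Fin k) (Fin k) ℝ) (hA : A = (J - R) * Q)
    (C : Matrix (Fin m₀) (Fin k) ℝ) (hC : C = Bᵀ * Q)
    (Le K : Matrix (Fin q) (Fin q) ℝ) :
    ((1 : Matrix (Fin q) (Fin q) ℝ) ⊗ₖ A - Le ⊗ₖ (B * C))ᵀ * (K ⊗ₖ Q)
      + (K ⊗ₖ Q) * ((1 : Matrix (Fin q) (Fin q) ℝ) ⊗ₖ A - Le ⊗ₖ (B * C))
    = (-2 : ℝ) • (K ⊗ₖ (Q * R * Q)) - (Leᵀ * K + K * Le) ⊗ₖ (Cᵀ * C) := by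
  have hRsymm : Rᵀ = R := hR.1
  have hAT : Aᵀ = Q * (-J - R) := by
    rw [hA, transpose_mul, transpose_sub, hJ, hRsymm, hQsymm]
  have hkey : Aᵀ * Q + Q * A = (-2 : ℝ) • (Q * R * Q) := by
    rw [hAT, hA]
    rw [neg_smul, ← one_add_one_eq_two, add_smul, one_smul, neg_add]
    noncomm_ring
  have hBCQ : (B * C)ᵀ * Q = Cᵀ * C := by
    rw [hC, transpose_mul, transpose_mul, hQsymm, transpose_transpose, Matrix.mul_assoc,
      Matrix.mul_assoc]
  have hQBC : Q * (B * C) = Cᵀ * C := by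
    rw [hC, transpose_mul, hQsymm, transpose_transpose, Matrix.mul_assoc]
  have h1 : ((1 : Matrix (Fin q) (Fin q) ℝ) ⊗ₖ A)ᵀ = (1 : Matrix (Fin q) (Fin q) ℝ) ⊗ₖ Aᵀ := by
    rw [← kroneckerMap_transpose, transpose_one]
  have h2 : (Le ⊗ₖ (B * C))ᵀ = Leᵀ ⊗ₖ (B * C)ᵀ := (kroneckerMap_transpose _ _ _).symm
  rw [transpose_sub, h1, h2, sub_mul, mul_sub, ← Matrix.mul_kronecker_mul,
    ← Matrix.mul_kronecker_mul, ← Matrix.mul_kronecker_mul, ← Matrix.mul_kronecker_mul,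
    one_mul, mul_one, hBCQ, hQBC, Matrix.add_kronecker, ← Matrix.kronecker_smul,
    ← hkey, Matrix.kronecker_add]
  abel
end

section
/- Let Q ∈ ℝ^{k×k} be symmetric positive definite, J ∈ ℝ^{k×k} skew-symmetric, R ∈ ℝ^{k×k} symmetric positive semidefinite, B ∈ ℝ^{k×m₀}; set A = (J − R)Q and C = BᵀQ. Let L_e ∈ ℝ^{q×q}, G_e ∈ ℝ^{q×r}, and Π ∈ ℝ^{q×q} be arbitrary. Then (I_q ⊗ A − L_e ⊗ BC)(Π ⊗ Q^{−1}) + (Π ⊗ Q^{−1})(I_q ⊗ A − L_e ⊗ BC)ᵀ + (G_e ⊗ B)(G_e ⊗ B)ᵀ = −2(Π ⊗ R) − (L_eΠ + ΠL_eᵀ − G_eG_eᵀ) ⊗ (BBᵀ). -/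
open Matrix Kronecker

/-- the key Gramian identity for port-Hamiltonian subsystems:
`(I ⊗ A - L_e ⊗ BC)(Π ⊗ Q⁻¹) + (Π ⊗ Q⁻¹)(I ⊗ A - L_e ⊗ BC)ᵀ + (G_e ⊗ B)(G_e ⊗ B)ᵀ
  = -2(Π ⊗ R) - (L_eΠ + ΠL_eᵀ - G_eG_eᵀ) ⊗ (BBᵀ)`. -/
theorem gramian_identity
    (k m₀ q r : ℕ)
    (Q J R : Matrix (Fin k) (Fin k) ℝ) (B : Matrix (Fin k) (Fin m₀) ℝ)
    (hQ : Q.PosDef) (hQsymm : Qᵀ = Q)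
    (hJ : Jᵀ = -J) (hR : R.PosSemidef)
    (A : Matrix (Fin k) (Fin k) ℝ) (hA : A = (J - R) * Q)
    (C : Matrix (Fin m₀) (Fin k) ℝ) (hC : C = Bᵀ * Q)
    (Le : Matrix (Fin q) (Fin q) ℝ) (Ge : Matrix (Fin q) (Fin r) ℝ)
    (Pc : Matrix (Fin q) (Fin q) ℝ) :
    ((1 : Matrix (Fin q) (Fin q) ℝ) ⊗ₖ A - Le ⊗ₖ (B * C)) * (Pc ⊗ₖ Q⁻¹)
      + (Pc ⊗ₖ Q⁻¹) * ((1 : Matrix (Fin q) (Fin q) ℝ) ⊗ₖ A - Le ⊗ₖ (B * C))ᵀ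
      + (Ge ⊗ₖ B) * (Ge ⊗ₖ B)ᵀ
    = (-2 : ℝ) • (Pc ⊗ₖ R) - (Le * Pc + Pc * Leᵀ - Ge * Geᵀ) ⊗ₖ (B * Bᵀ) := by
  have hdet : IsUnit Q.det := hQ.det_pos.ne'.isUnit
  have h1 : Q * Q⁻¹ = 1 := mul_nonsing_inv Q hdet
  have h2 : Q⁻¹ * Q = 1 := nonsing_inv_mul Q hdet
  have hRsymm : Rᵀ = R := hR.1
  have hAQ : A * Q⁻¹ = J - R := by rw [hA, mul_assoc, h1, mul_one]
  have hQA : Q⁻¹ * Aᵀ = -J - R := by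
    rw [hA, transpose_mul, hQsymm, transpose_sub, hJ, hRsymm, ← mul_assoc, h2, one_mul]
  have hBCQ : B * C * Q⁻¹ = B * Bᵀ := by simp only [hC, Matrix.mul_assoc]; rw [h1]; simp
  have hQBC : Q⁻¹ * (B * C)ᵀ = B * Bᵀ := by
    simp only [hC, transpose_mul, transpose_transpose, hQsymm, ← Matrix.mul_assoc]
    rw [h2]; simp
  rw [sub_mul, ← mul_kronecker_mul, ← mul_kronecker_mul, transpose_sub,
    ← kroneckerMap_transpose, ← kroneckerMap_transpose, mul_sub,
    ← mul_kronecker_mul, ← mul_kronecker_mul, ← kroneckerMap_transpose, ← mul_kronecker_mul,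
    hAQ, hQA, hBCQ, hQBC, one_mul, transpose_one, mul_one]
  ext i j
  simp [mul_comm, Matrix.sub_apply, Matrix.add_apply, Matrix.mul_apply]
  ring
end

section
/- Let Q ∈ ℝ^{k×k} be symmetric positive definite, J ∈ ℝ^{k×k} skew-symmetric, R ∈ ℝ^{k×k} symmetric positive semidefinite, B ∈ ℝ^{k×m₀}; set A = (J − R)Q and C = BᵀQ. Let E, F ∈ ℝ^{n×(n−1)}, L_e = EᵀF, G ∈ ℝ^{n×q}, and suppose every complex eigenvalue of 𝒜 := I_{n−1} ⊗ A − L_e ⊗ BC has strictly negative real part. Let P̄_e be the symmetric matrix solving the Lyapunov equation 𝒜 P̄_e + P̄_e 𝒜ᵀ + (EᵀG ⊗ B)(EᵀG ⊗ B)ᵀ = 0 (the edge controllability Gramian). If Π^c ∈ ℝ^{(n−1)×(n−1)} is diagonal positive semidefinite and satisfies L_eΠ^c + Π^c L_eᵀ − EᵀG GᵀE ⪰ 0, then Π^c ⊗ Q^{−1} − P̄_e is positive semidefinite, i.e., P̄_e ⪯ Π^c ⊗ Q^{−1}. -/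
open Matrix Kronecker


open scoped Topology
open Filter NormedSpace Polynomial

namespace LyapAux

variable {ι : Type*} [Fintype ι] [DecidableEq ι]

/-- If a nonzero vector is killed by a power of `Mc - μ • 1`, then `μ` is a root of the
characteristic polynomial of `Mc`. -/
lemma isRoot_charpoly_of_pow_mulVec_eq_zero (Mc : Matrix ι ι ℂ) {μ : ℂ} {v : ι → ℂ}
    (hv : v ≠ 0) {K : ℕ} (h : ((Mc - μ • 1) ^ K) *ᵥ v = 0) : Mc.charpoly.IsRoot μ := by
  have hdet : (Mc - μ • 1).det = 0 := by
    by_contra hd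
    have hunit : IsUnit ((Mc - μ • 1) ^ K).det := by
      rw [Matrix.det_pow]
      exact (pow_ne_zero _ hd).isUnit
    have := congrArg (fun w => ((Mc - μ • 1) ^ K)⁻¹ *ᵥ w) h
    simp only [Matrix.mulVec_mulVec, Matrix.nonsing_inv_mul _ hunit, Matrix.one_mulVec,
      Matrix.mulVec_zero] at this
    exact hv this
  have key : Mc.charpoly.eval μ = (μ • (1 : Matrix ι ι ℂ) - Mc).det := by
    rw [Matrix.charpoly, ← Polynomial.coe_evalRingHom, RingHom.map_det]
    congr 1
    ext i j
    by_cases hij : i = j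
    · subst hij
      simp [Matrix.charmatrix_apply_eq, Matrix.smul_apply]
    · simp [Matrix.charmatrix_apply_ne _ _ _ hij, Matrix.one_apply_ne hij,
        Matrix.smul_apply, hij]
  have : (μ • (1 : Matrix ι ι ℂ) - Mc).det = 0 := by
    have : μ • (1 : Matrix ι ι ℂ) - Mc = -(Mc - μ • 1) := by rw [neg_sub]
    rw [this, Matrix.det_neg, hdet, mul_zero]
  rwa [Polynomial.IsRoot, key]

lemma exp_smul_one (c : ℂ) :
    exp (c • (1 : Matrix ι ι ℂ)) = Complex.exp c • (1 : Matrix ι ι ℂ) := by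
  letI : SeminormedRing (Matrix ι ι ℂ) := Matrix.linftyOpSemiNormedRing
  letI : NormedRing (Matrix ι ι ℂ) := Matrix.linftyOpNormedRing
  letI : NormedAlgebra ℂ (Matrix ι ι ℂ) := Matrix.linftyOpNormedAlgebra
  letI : CompleteSpace (Matrix ι ι ℂ) := FiniteDimensional.complete ℂ _
  have h1 : c • (1 : Matrix ι ι ℂ) = algebraMap ℂ (Matrix ι ι ℂ) c :=
    (Algebra.algebraMap_eq_smul_one c).symm
  have h2 := algebraMap_exp_comm (𝕂 := ℂ) (𝔸 := Matrix ι ι ℂ) c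
  rw [Algebra.algebraMap_eq_smul_one, ← Complex.exp_eq_exp_ℂ] at h2
  rw [h1]; exact h2.symm

/-- Exponential decay on a generalized eigenvector with eigenvalue of negative real part. -/
lemma tendsto_exp_mulVec_of_genEig (Mc : Matrix ι ι ℂ) {μ : ℂ} (hμ : μ.re < 0)
    {v : ι → ℂ} {K : ℕ} (h : ((Mc - μ • 1) ^ K) *ᵥ v = 0) :
    Tendsto (fun t : ℝ => exp ((t : ℂ) • Mc) *ᵥ v) atTop (𝓝 0) := by
  letI : SeminormedRing (Matrix ι ι ℂ) := Matrix.linftyOpSemiNormedRing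
  letI : NormedRing (Matrix ι ι ℂ) := Matrix.linftyOpNormedRing
  letI : NormedAlgebra ℂ (Matrix ι ι ℂ) := Matrix.linftyOpNormedAlgebra
  letI : CompleteSpace (Matrix ι ι ℂ) := FiniteDimensional.complete ℂ _
  set N : Matrix ι ι ℂ := Mc - μ • 1 with hN
  -- the key pointwise formula
  have hform : ∀ t : ℝ, exp ((t : ℂ) • Mc) *ᵥ v =
      ∑ j ∈ Finset.range K, (Complex.exp ((t : ℂ) * μ) * ((t : ℂ) ^ j * (j.factorial : ℂ)⁻¹)) •
        (N ^ j *ᵥ v) := by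
    intro t
    have hsplit : (t : ℂ) • Mc = ((t : ℂ) * μ) • (1 : Matrix ι ι ℂ) + (t : ℂ) • N := by
      rw [hN, smul_sub, mul_smul]
      abel
    have hcomm : Commute (((t : ℂ) * μ) • (1 : Matrix ι ι ℂ)) ((t : ℂ) • N) := by
      refine (Commute.one_left _).smul_left _ |>.smul_right _
    rw [hsplit, Matrix.exp_add_of_commute _ _ hcomm, exp_smul_one]
    -- linear map `apply to v`
    let L : Matrix ι ι ℂ →ₗ[ℂ] ι → ℂ :=
      { toFun := fun U => U *ᵥ v
        map_add' := fun U V => Matrix.add_mulVec U V v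
        map_smul' := fun c U => Matrix.smul_mulVec c U v }
    let Lc : Matrix ι ι ℂ →L[ℂ] ι → ℂ := LinearMap.toContinuousLinearMap L
    have hexpN : exp ((t : ℂ) • N) *ᵥ v =
        ∑ j ∈ Finset.range K, ((t : ℂ) ^ j * (j.factorial : ℂ)⁻¹) • (N ^ j *ᵥ v) := by
      have h0 : exp ((t : ℂ) • N) *ᵥ v = Lc (exp ((t : ℂ) • N)) := rfl
      rw [h0, exp_eq_tsum (𝕂 := ℂ)]
      rw [Lc.map_tsum (expSeries_summable' (𝕂 := ℂ) ((t : ℂ) • N))]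
      have hterm : ∀ j : ℕ, Lc ((j.factorial : ℂ)⁻¹ • ((t : ℂ) • N) ^ j) =
          ((t : ℂ) ^ j * (j.factorial : ℂ)⁻¹) • (N ^ j *ᵥ v) := by
        intro j
        rw [_root_.map_smul, _root_.smul_pow, _root_.map_smul]
        have : Lc (N ^ j) = N ^ j *ᵥ v := rfl
        rw [this, smul_smul, mul_comm]
      have hzero : ∀ j ∉ Finset.range K,
          ((t : ℂ) ^ j * (j.factorial : ℂ)⁻¹) • (N ^ j *ᵥ v) = 0 := by
        intro j hj
        rw [Finset.mem_range, not_lt] at hj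
        have : N ^ j *ᵥ v = 0 := by
          have hsplit2 : N ^ j = N ^ (j - K) * N ^ K := by
            rw [← pow_add]
            congr 1
            omega
          rw [hsplit2, ← Matrix.mulVec_mulVec, h, Matrix.mulVec_zero]
        rw [this, smul_zero]
      calc ∑' j : ℕ, Lc ((j.factorial : ℂ)⁻¹ • ((t : ℂ) • N) ^ j)
          = ∑' j : ℕ, ((t : ℂ) ^ j * (j.factorial : ℂ)⁻¹) • (N ^ j *ᵥ v) := by
            exact tsum_congr hterm
        _ = ∑ j ∈ Finset.range K, ((t : ℂ) ^ j * (j.factorial : ℂ)⁻¹) • (N ^ j *ᵥ v) :=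
            tsum_eq_sum hzero
    rw [Matrix.smul_mul, Matrix.one_mul, Matrix.smul_mulVec, hexpN, Finset.smul_sum]
    refine Finset.sum_congr rfl fun j _ => ?_
    rw [smul_smul]
  simp only [hform]
  have htj : ∀ j ∈ Finset.range K, Tendsto (fun t : ℝ =>
      (Complex.exp ((t : ℂ) * μ) * ((t : ℂ) ^ j * (j.factorial : ℂ)⁻¹)) • (N ^ j *ᵥ v))
      atTop (𝓝 0) := by
    intro j _
    have hc : Tendsto (fun t : ℝ =>
        Complex.exp ((t : ℂ) * μ) * ((t : ℂ) ^ j * (j.factorial : ℂ)⁻¹)) atTop (𝓝 0) := by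
      rw [tendsto_zero_iff_norm_tendsto_zero]
      set b : ℝ := -μ.re with hb
      have hbpos : 0 < b := by simp [hb]; linarith
      have h1 : Tendsto (fun x : ℝ => x ^ j * Real.exp (-x)) atTop (𝓝 0) :=
        Real.tendsto_pow_mul_exp_neg_atTop_nhds_zero j
      have h2 : Tendsto (fun t : ℝ => b * t) atTop atTop :=
        Filter.Tendsto.const_mul_atTop hbpos tendsto_id
      have h3 : Tendsto (fun t : ℝ => (b * t) ^ j * Real.exp (-(b * t))) atTop (𝓝 0) :=
        h1.comp h2
      have h4 : Tendsto (fun t : ℝ =>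
          ((b ^ j)⁻¹ * (j.factorial : ℝ)⁻¹) * ((b * t) ^ j * Real.exp (-(b * t)))) atTop (𝓝 0) := by
        simpa using h3.const_mul ((b ^ j)⁻¹ * (j.factorial : ℝ)⁻¹)
      refine squeeze_zero_norm' ?_ h4
      filter_upwards [eventually_ge_atTop (0 : ℝ)] with t ht
      have hnorm : ‖Complex.exp ((t : ℂ) * μ) * ((t : ℂ) ^ j * (j.factorial : ℂ)⁻¹)‖ =
          Real.exp (t * μ.re) * (t ^ j * (j.factorial : ℝ)⁻¹) := by
        rw [norm_mul, norm_mul, Complex.norm_exp]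
        have : ((t : ℂ) * μ).re = t * μ.re := by simp
        rw [this]
        congr 1
        rw [norm_pow, Complex.norm_real, Real.norm_eq_abs, abs_of_nonneg ht]
        congr 1
        rw [norm_inv, Complex.norm_natCast]
      rw [Real.norm_eq_abs, abs_of_nonneg (by positivity), hnorm]
      have hexp2 : Real.exp (-(b * t)) = Real.exp (t * μ.re) := by
        rw [hb]; ring_nf
      have : ((b ^ j)⁻¹ * (j.factorial : ℝ)⁻¹) * ((b * t) ^ j * Real.exp (-(b * t))) =
          Real.exp (t * μ.re) * (t ^ j * (j.factorial : ℝ)⁻¹) := by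
        rw [mul_pow, hexp2]
        have hb' : (b : ℝ) ^ j ≠ 0 := by positivity
        field_simp
      rw [this]
    simpa using hc.smul_const (N ^ j *ᵥ v)
  simpa only [Finset.sum_const_zero] using tendsto_finset_sum (Finset.range K) htj

/-- Hurwitz matrices have decaying exponentials (complex version). -/
lemma tendsto_exp_mulVec_of_hurwitz (Mc : Matrix ι ι ℂ)
    (hHur : ∀ μ : ℂ, Mc.charpoly.IsRoot μ → μ.re < 0) (v : ι → ℂ) :
    Tendsto (fun t : ℝ => exp ((t : ℂ) • Mc) *ᵥ v) atTop (𝓝 0) := by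
  have htop := Module.End.iSup_maxGenEigenspace_eq_top (K := ℂ) (Matrix.toLinAlgEquiv' Mc)
  have hv : v ∈ ⨆ μ : ℂ, Module.End.maxGenEigenspace (Matrix.toLinAlgEquiv' Mc) μ := by
    rw [htop]; trivial
  rw [Submodule.mem_iSup_iff_exists_finsupp] at hv
  obtain ⟨a, ha, hsum⟩ := hv
  have hrw : (fun t : ℝ => exp ((t : ℂ) • Mc) *ᵥ v) =
      fun t : ℝ => ∑ μ ∈ a.support, exp ((t : ℂ) • Mc) *ᵥ (a μ) := by
    funext t
    rw [← hsum, Finsupp.sum]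
    exact map_sum (Matrix.mulVecLin (exp ((t : ℂ) • Mc))) _ _
  rw [hrw]
  have htj : ∀ μ ∈ a.support,
      Tendsto (fun t : ℝ => exp ((t : ℂ) • Mc) *ᵥ (a μ)) atTop (𝓝 0) := by
    intro μ hμs
    have hmem := ha μ
    rw [Module.End.mem_maxGenEigenspace] at hmem
    obtain ⟨K, hK⟩ := hmem
    have hne : a μ ≠ 0 := Finsupp.mem_support_iff.mp hμs
    -- translate the endomorphism power to a matrix power
    have hmat : ((Mc - μ • 1) ^ K) *ᵥ (a μ) = 0 := by
      have hEnd : (Matrix.toLinAlgEquiv' Mc - μ • (1 : Module.End ℂ (ι → ℂ))) ^ K =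
          Matrix.toLinAlgEquiv' ((Mc - μ • 1) ^ K) := by
        rw [map_pow, map_sub, _root_.map_smul, _root_.map_one]
      rw [hEnd] at hK
      rw [show ((Mc - μ • 1) ^ K) *ᵥ (a μ) = Matrix.toLinAlgEquiv' ((Mc - μ • 1) ^ K) (a μ)
        from rfl]
      exact hK
    have hroot : Mc.charpoly.IsRoot μ :=
      isRoot_charpoly_of_pow_mulVec_eq_zero Mc hne hmat
    exact tendsto_exp_mulVec_of_genEig Mc (hHur μ hroot) hmat
  simpa only [Finset.sum_const_zero] using tendsto_finset_sum a.support htj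

/-- Real version of decay. -/
lemma tendsto_exp_mulVec_of_hurwitz_real (M : Matrix ι ι ℝ)
    (hHur : ∀ μ : ℂ, ((M.map Complex.ofReal).charpoly).IsRoot μ → μ.re < 0) (v : ι → ℝ) :
    Tendsto (fun t : ℝ => exp (t • M) *ᵥ v) atTop (𝓝 0) := by
  have hC := tendsto_exp_mulVec_of_hurwitz (M.map Complex.ofReal) hHur (fun i => (v i : ℂ))
  have key : ∀ t : ℝ, (fun i => ((exp (t • M) *ᵥ v) i : ℂ)) =
      exp ((t : ℂ) • M.map Complex.ofReal) *ᵥ (fun i => (v i : ℂ)) := by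
    intro t
    have hmap : (exp (t • M)).map Complex.ofReal = exp ((t : ℂ) • M.map Complex.ofReal) := by
      letI : SeminormedRing (Matrix ι ι ℝ) := Matrix.linftyOpSemiNormedRing
      letI : NormedRing (Matrix ι ι ℝ) := Matrix.linftyOpNormedRing
      letI : NormedAlgebra ℝ (Matrix ι ι ℝ) := Matrix.linftyOpNormedAlgebra
      letI : CompleteSpace (Matrix ι ι ℝ) := FiniteDimensional.complete ℝ _
      letI : SeminormedRing (Matrix ι ι ℂ) := Matrix.linftyOpSemiNormedRing
      letI : NormedRing (Matrix ι ι ℂ) := Matrix.linftyOpNormedRing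
      letI : NormedAlgebra ℝ (Matrix ι ι ℂ) := Matrix.linftyOpNormedAlgebra
      letI : NormedAlgebra ℂ (Matrix ι ι ℂ) := Matrix.linftyOpNormedAlgebra
      letI : CompleteSpace (Matrix ι ι ℂ) := FiniteDimensional.complete ℝ _
      letI : NormedAlgebra ℚ (Matrix ι ι ℝ) := Matrix.linftyOpNormedAlgebra
      -- the map as a ring hom
      have hf : Continuous (fun U : Matrix ι ι ℝ => U.map Complex.ofReal) := by
        let l : Matrix ι ι ℝ →ₗ[ℝ] Matrix ι ι ℂ :=
          { toFun := fun U => U.map Complex.ofReal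
            map_add' := fun U V => by ext i j; simp
            map_smul' := fun c U => by ext i j; simp }
        exact l.continuous_of_finiteDimensional
      have h1 := map_exp ((RingHom.mapMatrix Complex.ofRealHom : Matrix ι ι ℝ →+* Matrix ι ι ℂ)) hf (t • M)
      have h2 : ((RingHom.mapMatrix Complex.ofRealHom : Matrix ι ι ℝ →+* Matrix ι ι ℂ)) (t • M) =
          t • M.map Complex.ofReal := by
        ext i j; simp
      have h3 : exp (t • M.map Complex.ofReal) = exp ((t : ℂ) • M.map Complex.ofReal) := by
        congr 1
      calc (exp (t • M)).map Complex.ofReal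
          = ((RingHom.mapMatrix Complex.ofRealHom : Matrix ι ι ℝ →+* Matrix ι ι ℂ)) (exp (t • M)) := rfl
        _ = exp (((RingHom.mapMatrix Complex.ofRealHom : Matrix ι ι ℝ →+* Matrix ι ι ℂ)) (t • M)) := h1
        _ = exp (t • M.map Complex.ofReal) := by rw [h2]
        _ = exp ((t : ℂ) • M.map Complex.ofReal) := h3
    funext i
    rw [← hmap]
    simp [Matrix.map_apply, Matrix.mulVec, dotProduct]
  rw [tendsto_pi_nhds]
  intro i
  have hCi : Tendsto (fun t : ℝ => (exp ((t : ℂ) • M.map Complex.ofReal) *ᵥ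
      (fun i => (v i : ℂ))) i) atTop (𝓝 0) := by
    have := (tendsto_pi_nhds.mp hC) i
    simpa using this
  have : Tendsto (fun t : ℝ => ((exp (t • M) *ᵥ v) i : ℂ)) atTop (𝓝 0) := by
    refine hCi.congr fun t => ?_
    rw [← key t]
  have hre := (Complex.continuous_re.tendsto 0).comp this
  simpa [Function.comp_def] using hre

/-- The Lyapunov-type positivity result. -/
lemma lyapunov (M X S : Matrix ι ι ℝ)
    (hHur : ∀ μ : ℂ, ((M.map Complex.ofReal).charpoly).IsRoot μ → μ.re < 0)
    (hX : Xᵀ = X) (hS : S.PosSemidef)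
    (heq : M * X + X * Mᵀ = -S) : X.PosSemidef := by
  rw [Matrix.posSemidef_iff_dotProduct_mulVec]
  constructor
  · show Xᴴ = X
    ext i j
    rw [Matrix.conjTranspose_apply, star_trivial]
    exact congrFun (congrFun hX i) j
  intro v
  letI : SeminormedRing (Matrix ι ι ℝ) := Matrix.linftyOpSemiNormedRing
  letI : NormedRing (Matrix ι ι ℝ) := Matrix.linftyOpNormedRing
  letI : NormedAlgebra ℝ (Matrix ι ι ℝ) := Matrix.linftyOpNormedAlgebra
  letI : CompleteSpace (Matrix ι ι ℝ) := FiniteDimensional.complete ℝ _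
  -- Hurwitz for the transpose
  have hHurT : ∀ μ : ℂ, (((Mᵀ).map Complex.ofReal).charpoly).IsRoot μ → μ.re < 0 := by
    intro μ hroot
    apply hHur μ
    have h1 : (Mᵀ).map Complex.ofReal = (M.map Complex.ofReal)ᵀ := by
      ext i j; simp
    have h2 : ((M.map Complex.ofReal)ᵀ).charpoly = (M.map Complex.ofReal).charpoly := by
      rw [Matrix.charpoly, Matrix.charpoly]
      have : charmatrix ((M.map Complex.ofReal)ᵀ) = (charmatrix (M.map Complex.ofReal))ᵀ := by
        ext i j
        by_cases hij : i = j
        · subst hij; simp [charmatrix_apply_eq]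
        · simp [charmatrix_apply_ne _ _ _ hij, charmatrix_apply_ne _ _ _ (Ne.symm hij)]
      rw [this, Matrix.det_transpose]
    rwa [h1, h2] at hroot
  set w : ℝ → ι → ℝ := fun t => exp (t • Mᵀ) *ᵥ v with hw
  have hw0 : Tendsto w atTop (𝓝 0) := tendsto_exp_mulVec_of_hurwitz_real Mᵀ hHurT v
  -- derivative of w
  let L : Matrix ι ι ℝ →ₗ[ℝ] ι → ℝ :=
    { toFun := fun U => U *ᵥ v
      map_add' := fun U V => Matrix.add_mulVec U V v
      map_smul' := fun c U => Matrix.smul_mulVec c U v }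
  let Lc : Matrix ι ι ℝ →L[ℝ] ι → ℝ := LinearMap.toContinuousLinearMap L
  have hwderiv : ∀ t : ℝ, HasDerivAt w (Mᵀ *ᵥ w t) t := by
    intro t
    have hexp := hasDerivAt_exp_smul_const' (𝕂 := ℝ) (Mᵀ) t
    have hcomp := (Lc.hasFDerivAt (x := exp (t • Mᵀ))).comp_hasDerivAt t hexp
    have : Lc (Mᵀ * exp (t • Mᵀ)) = Mᵀ *ᵥ w t := by
      show (Mᵀ * exp (t • Mᵀ)) *ᵥ v = Mᵀ *ᵥ w t
      rw [← Matrix.mulVec_mulVec]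
    rw [← this]
    exact hcomp
  -- the Lyapunov function
  set g : ℝ → ℝ := fun t => w t ⬝ᵥ (X *ᵥ w t) with hg
  have hgderiv : ∀ t : ℝ, HasDerivAt g
      ((Mᵀ *ᵥ w t) ⬝ᵥ (X *ᵥ w t) + w t ⬝ᵥ (X *ᵥ (Mᵀ *ᵥ w t))) t := by
    intro t
    have hwi : ∀ i : ι, HasDerivAt (fun s => w s i) ((Mᵀ *ᵥ w t) i) t := by
      intro i
      have := ((ContinuousLinearMap.proj (R := ℝ) (φ := fun _ : ι => ℝ) i).hasFDerivAt
        (x := w t)).comp_hasDerivAt t (hwderiv t)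
      exact this
    have hsum : HasDerivAt (fun s => ∑ i, ∑ j, w s i * (X i j * w s j))
        (∑ i, ∑ j, ((Mᵀ *ᵥ w t) i * (X i j * w t j) +
          w t i * (X i j * (Mᵀ *ᵥ w t) j))) t := by
      refine HasDerivAt.fun_sum fun i _ => ?_
      refine HasDerivAt.fun_sum fun j _ => ?_
      have h1 := (hwi i).mul ((hwi j).const_mul (X i j))
      exact h1
    have hgeq : g = fun s => ∑ i, ∑ j, w s i * (X i j * w s j) := by
      funext s
      simp [hg, dotProduct, Matrix.mulVec, Finset.mul_sum]
    have hveq : (Mᵀ *ᵥ w t) ⬝ᵥ (X *ᵥ w t) + w t ⬝ᵥ (X *ᵥ (Mᵀ *ᵥ w t)) =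
        ∑ i, ∑ j, ((Mᵀ *ᵥ w t) i * (X i j * w t j) + w t i * (X i j * (Mᵀ *ᵥ w t) j)) := by
      simp [dotProduct, Matrix.mulVec, Finset.mul_sum, Finset.sum_add_distrib]
    rw [hgeq, hveq]
    exact hsum
  -- derivative is nonpositive
  have hderiv_nonpos : ∀ t : ℝ, deriv g t ≤ 0 := by
    intro t
    rw [(hgderiv t).deriv]
    have e1 : (Mᵀ *ᵥ w t) ⬝ᵥ (X *ᵥ w t) = w t ⬝ᵥ ((M * X) *ᵥ w t) := by
      rw [← Matrix.mulVec_mulVec, Matrix.dotProduct_mulVec (w t) M (X *ᵥ w t),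
        ← Matrix.mulVec_transpose]
    have e2 : w t ⬝ᵥ (X *ᵥ (Mᵀ *ᵥ w t)) = w t ⬝ᵥ ((X * Mᵀ) *ᵥ w t) := by
      rw [Matrix.mulVec_mulVec]
    rw [e1, e2, ← dotProduct_add, ← Matrix.add_mulVec, heq]
    have hq := hS.dotProduct_mulVec_nonneg (w t)
    have hstar : star (w t) = w t := by funext i; exact star_trivial _
    rw [hstar] at hq
    rw [Matrix.neg_mulVec, dotProduct_neg]
    linarith
  -- g is antitone and tends to 0, hence g 0 ≥ 0
  have hdiff : Differentiable ℝ g := fun t => (hgderiv t).differentiableAt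
  have hanti : Antitone g := antitone_of_deriv_nonpos hdiff hderiv_nonpos
  have hglim : Tendsto g atTop (𝓝 0) := by
    have hFeq : (fun u : ι → ℝ => u ⬝ᵥ (X *ᵥ u)) =
        fun u : ι → ℝ => ∑ i, u i * ∑ j, X i j * u j := by
      funext u; simp [dotProduct, Matrix.mulVec]
    have hFcont : Continuous (fun u : ι → ℝ => u ⬝ᵥ (X *ᵥ u)) := by
      rw [hFeq]
      exact continuous_finset_sum _ fun i _ => (continuous_apply i).mul
        (continuous_finset_sum _ fun j _ => continuous_const.mul (continuous_apply j))
    have := (hFcont.tendsto 0).comp hw0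
    simpa [Function.comp_def] using this
  have hge : ∀ t ≥ (0 : ℝ), g t ≤ g 0 := fun t ht => hanti ht
  have h0le : (0 : ℝ) ≤ g 0 := le_of_tendsto hglim (eventually_atTop.mpr ⟨0, hge⟩)
  have hw00 : w 0 = v := by
    rw [hw]
    simp only [zero_smul, exp_zero, Matrix.one_mulVec]
  have hstar : star v = v := by funext i; exact star_trivial _
  rw [hstar]
  have : g 0 = v ⬝ᵥ (X *ᵥ v) := by rw [hg]; simp only [hw00]
  rw [← this]
  exact h0le

lemma kroneckerPosSemidef {ι κ : Type*} [Fintype ι] [DecidableEq ι] [Fintype κ] [DecidableEq κ]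
    {A : Matrix ι ι ℝ} {B : Matrix κ κ ℝ} (hA : A.PosSemidef) (hB : B.PosSemidef) :
    (A ⊗ₖ B).PosSemidef := by
  exact Matrix.PosSemidef.kronecker hA hB

lemma sub_kron {l m p q : Type*} (A B : Matrix l m ℝ) (C : Matrix p q ℝ) :
    (A - B) ⊗ₖ C = A ⊗ₖ C - B ⊗ₖ C := by
  ext ⟨i, p'⟩ ⟨j, q'⟩
  simp [Matrix.kroneckerMap_apply, Matrix.sub_apply, sub_mul]

lemma neg_kron_right {l m p q : Type*} (A : Matrix l m ℝ) (C : Matrix p q ℝ) :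
    A ⊗ₖ (-C) = -(A ⊗ₖ C) := by
  ext ⟨i, p'⟩ ⟨j, q'⟩
  simp [Matrix.kroneckerMap_apply]

end LyapAux

/-- the generalized edge controllability Gramian `Π^c ⊗ Q⁻¹` bounds the
edge controllability Gramian `P̄_e` from above: `P̄_e ⪯ Π^c ⊗ Q⁻¹`. -/
theorem generalized_edge_controllability_gramian_bound
    (n k m₀ q : ℕ) (hn : 2 ≤ n)
    (Q J R : Matrix (Fin k) (Fin k) ℝ) (B : Matrix (Fin k) (Fin m₀) ℝ)
    (hQ : Q.PosDef) (hJ : Jᵀ = -J) (hR : R.PosSemidef)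
    (A : Matrix (Fin k) (Fin k) ℝ) (hA : A = (J - R) * Q)
    (C : Matrix (Fin m₀) (Fin k) ℝ) (hC : C = Bᵀ * Q)
    (E F : Matrix (Fin n) (Fin (n-1)) ℝ)
    (Le : Matrix (Fin (n-1)) (Fin (n-1)) ℝ) (hLe : Le = Eᵀ * F)
    (G : Matrix (Fin n) (Fin q) ℝ)
    (𝒜 : Matrix (Fin (n-1) × Fin k) (Fin (n-1) × Fin k) ℝ)
    (h𝒜 : 𝒜 = (1 : Matrix (Fin (n-1)) (Fin (n-1)) ℝ) ⊗ₖ A - Le ⊗ₖ (B * C))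
    -- 𝒜 is Hurwitz
    (hHurwitz : ∀ μ : ℂ, ((𝒜.map (Complex.ofReal)).charpoly).IsRoot μ → μ.re < 0)
    -- the edge controllability Gramian
    (Pe : Matrix (Fin (n-1) × Fin k) (Fin (n-1) × Fin k) ℝ)
    (hPesymm : Peᵀ = Pe)
    (hPe : 𝒜 * Pe + Pe * 𝒜ᵀ + ((Eᵀ * G) ⊗ₖ B) * ((Eᵀ * G) ⊗ₖ B)ᵀ = 0)
    -- the generalized edge controllability Gramian certificate
    (Pc : Matrix (Fin (n-1)) (Fin (n-1)) ℝ)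
    (hPcdiag : Pc.IsDiag) (hPcpsd : Pc.PosSemidef)
    (hPcineq : (Le * Pc + Pc * Leᵀ - Eᵀ * G * Gᵀ * E).PosSemidef) :
    (Pc ⊗ₖ Q⁻¹ - Pe).PosSemidef := by
  -- basic facts about Q
  have hQunit : IsUnit Q := hQ.isUnit
  have hQdet : IsUnit Q.det := (Matrix.isUnit_iff_isUnit_det Q).mp hQunit
  have hQQ : Q * Q⁻¹ = 1 := Matrix.mul_nonsing_inv Q hQdet
  have hQ'Q : Q⁻¹ * Q = 1 := Matrix.nonsing_inv_mul Q hQdet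
  have hQsymm : Qᵀ = Q := by
    have := hQ.isHermitian
    ext i j
    have h := congrFun (congrFun this i) j
    rw [Matrix.conjTranspose_apply, star_trivial] at h
    exact h
  have hQinvsymm : (Q⁻¹)ᵀ = Q⁻¹ := by
    rw [Matrix.transpose_nonsing_inv, hQsymm]
  have hRsymm : Rᵀ = R := by
    have := hR.isHermitian
    ext i j
    have h := congrFun (congrFun this i) j
    rw [Matrix.conjTranspose_apply, star_trivial] at h
    exact h
  have hPcsymm : Pcᵀ = Pc := by
    have := hPcpsd.isHermitian
    ext i j
    have h := congrFun (congrFun this i) j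
    rw [Matrix.conjTranspose_apply, star_trivial] at h
    exact h
  set X : Matrix (Fin (n-1) × Fin k) (Fin (n-1) × Fin k) ℝ := Pc ⊗ₖ Q⁻¹ - Pe with hXdef
  set Km : Matrix (Fin (n-1)) (Fin (n-1)) ℝ := Le * Pc + Pc * Leᵀ - Eᵀ * G * Gᵀ * E with hKm
  set S : Matrix (Fin (n-1) × Fin k) (Fin (n-1) × Fin k) ℝ :=
    Pc ⊗ₖ (R + R) + Km ⊗ₖ (B * Bᵀ) with hSdef
  -- symmetry of X
  have hXsymm : Xᵀ = X := by
    rw [hXdef, Matrix.transpose_sub, ← Matrix.kroneckerMap_transpose, hPcsymm, hQinvsymm, hPesymm]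
  -- S is PSD
  have hBB : (B * Bᵀ).PosSemidef := by
    have h := Matrix.posSemidef_self_mul_conjTranspose B
    have : Bᴴ = Bᵀ := by ext i j; exact star_trivial _
    rwa [this] at h
  have hSpsd : S.PosSemidef := by
    refine Matrix.PosSemidef.add ?_ ?_
    · exact LyapAux.kroneckerPosSemidef hPcpsd (hR.add hR)
    · exact LyapAux.kroneckerPosSemidef hPcineq hBB
  -- the Lyapunov equation for X
  have hBC : B * C = B * Bᵀ * Q := by rw [hC, Matrix.mul_assoc]
  have h1 : ((1 : Matrix (Fin (n-1)) (Fin (n-1)) ℝ) ⊗ₖ A) * (Pc ⊗ₖ Q⁻¹) = Pc ⊗ₖ (J - R) := by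
    rw [← Matrix.mul_kronecker_mul, Matrix.one_mul, hA, Matrix.mul_assoc, hQQ, Matrix.mul_one]
  have h2 : (Le ⊗ₖ (B * C)) * (Pc ⊗ₖ Q⁻¹) = (Le * Pc) ⊗ₖ (B * Bᵀ) := by
    rw [← Matrix.mul_kronecker_mul, hBC, Matrix.mul_assoc (B * Bᵀ), hQQ, Matrix.mul_one]
  have h3 : (Pc ⊗ₖ Q⁻¹) * ((1 : Matrix (Fin (n-1)) (Fin (n-1)) ℝ) ⊗ₖ A)ᵀ =
      Pc ⊗ₖ (-J - R) := by
    rw [← Matrix.kroneckerMap_transpose, Matrix.transpose_one, ← Matrix.mul_kronecker_mul,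
      Matrix.mul_one]
    congr 1
    rw [hA, Matrix.transpose_mul, hQsymm, Matrix.transpose_sub, hJ, hRsymm, ← Matrix.mul_assoc,
      hQ'Q, Matrix.one_mul]
  have h4 : (Pc ⊗ₖ Q⁻¹) * (Le ⊗ₖ (B * C))ᵀ = (Pc * Leᵀ) ⊗ₖ (B * Bᵀ) := by
    rw [← Matrix.kroneckerMap_transpose, ← Matrix.mul_kronecker_mul]
    congr 1
    rw [hBC, Matrix.transpose_mul, hQsymm]
    rw [← Matrix.mul_assoc, hQ'Q, Matrix.one_mul, Matrix.transpose_mul,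
      Matrix.transpose_transpose]
  have h5 : 𝒜 * Pe + Pe * 𝒜ᵀ = -((Eᵀ * G * Gᵀ * E) ⊗ₖ (B * Bᵀ)) := by
    have hG : ((Eᵀ * G) ⊗ₖ B) * ((Eᵀ * G) ⊗ₖ B)ᵀ = (Eᵀ * G * Gᵀ * E) ⊗ₖ (B * Bᵀ) := by
      rw [← Matrix.kroneckerMap_transpose]
      rw [← Matrix.mul_kronecker_mul]
      rw [Matrix.transpose_mul, Matrix.transpose_transpose, ← Matrix.mul_assoc]
    rw [← hG]
    exact add_eq_zero_iff_eq_neg.mp hPe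
  have heq : 𝒜 * X + X * 𝒜ᵀ = -S := by
    have e1 : 𝒜 * (Pc ⊗ₖ Q⁻¹) = Pc ⊗ₖ (J - R) - (Le * Pc) ⊗ₖ (B * Bᵀ) := by
      rw [h𝒜, Matrix.sub_mul, h1, h2]
    have e2 : (Pc ⊗ₖ Q⁻¹) * 𝒜ᵀ = Pc ⊗ₖ (-J - R) - (Pc * Leᵀ) ⊗ₖ (B * Bᵀ) := by
      rw [h𝒜, Matrix.transpose_sub, Matrix.mul_sub, h3, h4]
    have e3 : Pc ⊗ₖ (J - R) + Pc ⊗ₖ (-J - R) = -(Pc ⊗ₖ (R + R)) := by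
      rw [← Matrix.kronecker_add]
      have : (J - R) + (-J - R) = -(R + R) := by abel
      rw [this, LyapAux.neg_kron_right]
    have e4 : (Le * Pc) ⊗ₖ (B * Bᵀ) + (Pc * Leᵀ) ⊗ₖ (B * Bᵀ) - (Eᵀ * G * Gᵀ * E) ⊗ₖ (B * Bᵀ)
        = Km ⊗ₖ (B * Bᵀ) := by
      rw [hKm, LyapAux.sub_kron, ← Matrix.add_kronecker]
    calc 𝒜 * X + X * 𝒜ᵀ
        = (𝒜 * (Pc ⊗ₖ Q⁻¹) + (Pc ⊗ₖ Q⁻¹) * 𝒜ᵀ) - (𝒜 * Pe + Pe * 𝒜ᵀ) := by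
          rw [hXdef, Matrix.mul_sub, Matrix.sub_mul]; abel
      _ = (Pc ⊗ₖ (J - R) + Pc ⊗ₖ (-J - R)) -
            ((Le * Pc) ⊗ₖ (B * Bᵀ) + (Pc * Leᵀ) ⊗ₖ (B * Bᵀ) - (Eᵀ * G * Gᵀ * E) ⊗ₖ (B * Bᵀ)) := by
          rw [e1, e2, h5]; abel
      _ = -(Pc ⊗ₖ (R + R)) - Km ⊗ₖ (B * Bᵀ) := by rw [e3, e4]
      _ = -S := by rw [hSdef]; abel
  exact LyapAux.lyapunov 𝒜 X S hHurwitz hXsymm hSpsd heq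
end

section
/- Let Q ∈ ℝ^{k×k} be symmetric positive definite, J ∈ ℝ^{k×k} skew-symmetric, R ∈ ℝ^{k×k} symmetric positive semidefinite, B ∈ ℝ^{k×m₀}; set A = (J − R)Q and C = BᵀQ. Let E, F ∈ ℝ^{n×(n−1)}, L_e = EᵀF, H ∈ ℝ^{p×n}, and suppose every complex eigenvalue of 𝒜 := I_{n−1} ⊗ A − L_e ⊗ BC has strictly negative real part. Let Q̄_f be the symmetric matrix solving the Lyapunov equation 𝒜ᵀ Q̄_f + Q̄_f 𝒜 + (HF ⊗ C)ᵀ(HF ⊗ C) = 0 (the edge observability Gramian). If Π^o ∈ ℝ^{(n−1)×(n−1)} is diagonal positive semidefinite and satisfies L_eᵀΠ^o + Π^o L_e − FᵀHᵀH F ⪰ 0, then Π^o ⊗ Q − Q̄_f is positive semidefinite, i.e., Q̄_f ⪯ Π^o ⊗ Q. -/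
open Matrix Filter NormedSpace

attribute [local instance] Matrix.linftyOpSemiNormedRing Matrix.linftyOpNormedRing
  Matrix.linftyOpNormedAlgebra

lemma aux_poly_exp (b : ℝ) (hb : b < 0) (j : ℕ) :
    Tendsto (fun t : ℝ => Real.exp (b * t) * t ^ j) atTop (nhds 0) := by
  have h1 : Tendsto (fun t : ℝ => (-b) * t) atTop atTop :=
    Tendsto.const_mul_atTop (by linarith) tendsto_id
  have h2 := (Real.tendsto_pow_mul_exp_neg_atTop_nhds_zero j).comp h1
  have h3 : Tendsto (fun t : ℝ => ((-b) ^ j)⁻¹ * (((-b) * t) ^ j * Real.exp (-((-b) * t))))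
      atTop (nhds 0) := by
    simpa using h2.const_mul ((-b) ^ j)⁻¹
  refine h3.congr fun t => ?_
  have hbne : ((-b) : ℝ) ^ j ≠ 0 := pow_ne_zero _ (by linarith)
  have : -((-b) * t) = b * t := by ring
  rw [this, mul_pow]
  field_simp

variable {ι : Type*} [Fintype ι] [DecidableEq ι]

/-- mulVec by fixed vector as a continuous linear map -/
noncomputable def mulVecCLM (v : ι → ℂ) : Matrix ι ι ℂ →L[ℂ] (ι → ℂ) :=
  LinearMap.toContinuousLinearMap
    { toFun := fun X => X *ᵥ v
      map_add' := fun X Y => Matrix.add_mulVec X Y v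
      map_smul' := fun c X => Matrix.smul_mulVec c X v }

lemma decay_genEig (M : Matrix ι ι ℂ) (μ : ℂ) (hμ : μ.re < 0) (m : ℕ)
    (v : ι → ℂ) (hv : ((M - μ • 1) ^ m) *ᵥ v = 0) :
    Tendsto (fun t : ℝ => exp ((t : ℂ) • M) *ᵥ v) atTop (nhds 0) := by
  set N : Matrix ι ι ℂ := M - μ • 1 with hN
  have hNj : ∀ j, m ≤ j → N ^ j *ᵥ v = 0 := by
    intro j hj
    rw [← Nat.sub_add_cancel hj, pow_add, ← Matrix.mulVec_mulVec, hv, Matrix.mulVec_zero]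
  have key : ∀ t : ℝ, exp ((t : ℂ) • M) *ᵥ v =
      ∑ j ∈ Finset.range m,
        (Complex.exp ((t : ℂ) * μ) * ((j.factorial : ℂ))⁻¹ * (t : ℂ) ^ j) • (N ^ j *ᵥ v) := by
    intro t
    have hsplit : (t : ℂ) • M = ((t : ℂ) * μ) • (1 : Matrix ι ι ℂ) + (t : ℂ) • N := by
      rw [hN, smul_sub, smul_smul]
      abel
    have hcomm : Commute (((t : ℂ) * μ) • (1 : Matrix ι ι ℂ)) ((t : ℂ) • N) :=
      ((Commute.one_left N).smul_left _).smul_right _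
    rw [hsplit, Matrix.exp_add_of_commute _ _ hcomm]
    have h1 : exp (((t : ℂ) * μ) • (1 : Matrix ι ι ℂ)) =
        Complex.exp ((t : ℂ) * μ) • (1 : Matrix ι ι ℂ) := by
      erw [← Algebra.algebraMap_eq_smul_one, ← algebraMap_exp_comm, Complex.exp_eq_exp_ℂ,
        Algebra.algebraMap_eq_smul_one]
    have h2 : exp ((t : ℂ) • N) *ᵥ v =
        ∑ j ∈ Finset.range m, (((j.factorial : ℂ))⁻¹ * (t : ℂ) ^ j) • (N ^ j *ᵥ v) := by
      have hexp : exp ((t : ℂ) • N) = ∑' j : ℕ, ((j.factorial : ℂ))⁻¹ • ((t : ℂ) • N) ^ j := by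
        rw [exp_eq_tsum ℂ]
      have hsum : Summable fun j : ℕ => ((j.factorial : ℂ))⁻¹ • ((t : ℂ) • N) ^ j :=
        expSeries_summable' (𝕂 := ℂ) ((t : ℂ) • N)
      calc exp ((t : ℂ) • N) *ᵥ v = mulVecCLM v (exp ((t : ℂ) • N)) := rfl
        _ = ∑' j : ℕ, mulVecCLM v (((j.factorial : ℂ))⁻¹ • ((t : ℂ) • N) ^ j) := by
            rw [hexp, (mulVecCLM v).map_tsum hsum]
        _ = ∑' j : ℕ, (((j.factorial : ℂ))⁻¹ * (t : ℂ) ^ j) • (N ^ j *ᵥ v) := by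
            congr 1; funext j
            simp only [mulVecCLM, LinearMap.coe_toContinuousLinearMap', LinearMap.coe_mk,
              AddHom.coe_mk, smul_pow, Matrix.smul_mulVec, smul_smul]
        _ = ∑ j ∈ Finset.range m, (((j.factorial : ℂ))⁻¹ * (t : ℂ) ^ j) • (N ^ j *ᵥ v) := by
            refine tsum_eq_sum fun j hj => ?_
            rw [hNj j (Nat.le_of_not_lt (by simpa using hj))]
            simp
    rw [← Matrix.mulVec_mulVec, h2, h1, Matrix.smul_mulVec, Matrix.one_mulVec,
      Finset.smul_sum]
    refine Finset.sum_congr rfl fun j _ => ?_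
    rw [smul_smul, mul_assoc]
  have main : Tendsto (fun t : ℝ => ∑ j ∈ Finset.range m,
      (Complex.exp ((t : ℂ) * μ) * ((j.factorial : ℂ))⁻¹ * (t : ℂ) ^ j) • (N ^ j *ᵥ v))
      atTop (nhds 0) := by
    have h0 : (0 : ι → ℂ) = ∑ _j ∈ Finset.range m, (0 : ι → ℂ) := by simp
    rw [h0]
    refine tendsto_finset_sum _ fun j _ => ?_
    have hscal : Tendsto (fun t : ℝ =>
        Complex.exp ((t : ℂ) * μ) * ((j.factorial : ℂ))⁻¹ * (t : ℂ) ^ j) atTop (nhds 0) := by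
      have hb : Tendsto (fun t : ℝ => Real.exp (μ.re * t) * t ^ j * ((j.factorial : ℝ))⁻¹)
          atTop (nhds 0) := by
        simpa using (aux_poly_exp μ.re hμ j).mul_const ((j.factorial : ℝ))⁻¹
      refine squeeze_zero_norm' ?_ hb
      filter_upwards [eventually_ge_atTop (0 : ℝ)] with t ht
      have h1 : ‖Complex.exp ((t : ℂ) * μ)‖ = Real.exp (μ.re * t) := by
        rw [Complex.norm_exp]
        congr 1
        simp [Complex.mul_re, mul_comm]
      have h2 : ‖((t : ℂ)) ^ j‖ = t ^ j := by
        rw [norm_pow]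
        simp [abs_of_nonneg ht]
      rw [norm_mul, norm_mul, h1, h2]
      have h3 : ‖((j.factorial : ℂ))⁻¹‖ = ((j.factorial : ℝ))⁻¹ := by
        rw [norm_inv]
        simp
      rw [h3]
      ring_nf
      exact le_refl _
    simpa using hscal.smul_const (N ^ j *ᵥ v)
  exact main.congr fun t => (key t).symm

lemma decay_complex (M : Matrix ι ι ℂ)
    (hyp : ∀ μ : ℂ, (M.charpoly).IsRoot μ → μ.re < 0) (v : ι → ℂ) :
    Tendsto (fun t : ℝ => exp ((t : ℂ) • M) *ᵥ v) atTop (nhds 0) := by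
  set f : Module.End ℂ (ι → ℂ) := Matrix.toLinAlgEquiv' M with hf
  have htop := Module.End.iSup_maxGenEigenspace_eq_top f
  have hv : v ∈ ⨆ μ : ℂ, f.maxGenEigenspace μ := htop ▸ Submodule.mem_top
  refine Submodule.iSup_induction _ (motive := fun w =>
      Tendsto (fun t : ℝ => exp ((t : ℂ) • M) *ᵥ w) atTop (nhds 0)) hv ?_ ?_ ?_
  · intro μ w hw
    rcases (Module.End.mem_maxGenEigenspace f μ w).mp hw with ⟨k, hk⟩
    by_cases hw0 : w = 0
    · simpa [hw0] using tendsto_const_nhds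
    · have hmat : ((M - μ • 1) ^ k) *ᵥ w = 0 := by
        have : (f - μ • 1) ^ k = Matrix.toLinAlgEquiv' ((M - μ • 1) ^ k) := by
          rw [map_pow, map_sub, _root_.map_smul, _root_.map_one]
        rw [this] at hk
        rw [show (Matrix.toLinAlgEquiv' ((M - μ • 1) ^ k)) w = ((M - μ • 1) ^ k) *ᵥ w from rfl] at hk
        exact hk
      have hμre : μ.re < 0 := by
        have hwmem : w ∈ f.genEigenspace μ k := by
          rw [Module.End.mem_genEigenspace_nat]
          exact hk
        have hgen : f.HasGenEigenvalue μ k :=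
          Submodule.ne_bot_iff _ |>.mpr ⟨w, hwmem, hw0⟩
        have heig : f.HasEigenvalue μ := Module.End.hasEigenvalue_of_hasGenEigenvalue hgen
        have hroot : (minpoly ℂ f).IsRoot μ := Module.End.hasEigenvalue_iff_isRoot.mp heig
        have hmp : minpoly ℂ f = minpoly ℂ M := minpoly.algEquiv_eq Matrix.toLinAlgEquiv' M
        exact hyp μ (hroot.dvd (hmp ▸ Matrix.minpoly_dvd_charpoly M))
      exact decay_genEig M μ hμre k w hmat
  · simpa using tendsto_const_nhds
  · intro x y hx hy
    simpa [Matrix.mulVec_add] using hx.add hy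

lemma decay_real (𝒜 : Matrix ι ι ℝ)
    (hH : ∀ μ : ℂ, ((𝒜.map Complex.ofReal).charpoly).IsRoot μ → μ.re < 0) :
    Tendsto (fun t : ℝ => exp (t • 𝒜)) atTop (nhds 0) := by
  set Mc : Matrix ι ι ℂ := 𝒜.map Complex.ofReal with hMc
  have hmap : ∀ t : ℝ, (exp (t • 𝒜)).map Complex.ofReal = exp ((t : ℂ) • Mc) := by
    intro t
    have hcont : Continuous fun X : Matrix ι ι ℝ => X.map Complex.ofReal :=
      Continuous.matrix_map continuous_id Complex.continuous_ofReal
    have h1 := map_exp ((algebraMap ℝ ℂ).mapMatrix : Matrix ι ι ℝ →+* Matrix ι ι ℂ)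
      (by exact hcont) (t • 𝒜)
    have h2 : ((algebraMap ℝ ℂ).mapMatrix : Matrix ι ι ℝ →+* Matrix ι ι ℂ) (t • 𝒜)
        = (t : ℂ) • Mc := by
      ext i j
      simp [RingHom.mapMatrix_apply, hMc, Matrix.map_apply, Complex.ofReal_mul]
    have h3 : (exp : Matrix ι ι ℂ → Matrix ι ι ℂ) = exp := rfl
    calc (exp (t • 𝒜)).map Complex.ofReal
        = ((algebraMap ℝ ℂ).mapMatrix : Matrix ι ι ℝ →+* Matrix ι ι ℂ) (exp (t • 𝒜)) := rfl
      _ = exp ((t : ℂ) • Mc) := by erw [h1, h2]; rfl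
      _ = exp ((t : ℂ) • Mc) := by rw [h3]
  have hent : ∀ i j : ι, Tendsto (fun t : ℝ => exp (t • 𝒜) i j) atTop (nhds 0) := by
    intro i j
    have hc : Tendsto (fun t : ℝ => exp ((t : ℂ) • Mc) *ᵥ Pi.single j 1) atTop (nhds 0) :=
      decay_complex Mc hH (Pi.single j 1)
    have hcij : Tendsto (fun t : ℝ => (exp ((t : ℂ) • Mc) *ᵥ Pi.single j 1) i)
        atTop (nhds 0) := by
      have := (continuous_apply i).tendsto (0 : ι → ℂ)
      simpa [Function.comp_def] using this.comp hc
    have heq : ∀ t : ℝ, (exp ((t : ℂ) • Mc) *ᵥ Pi.single j 1) i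
        = Complex.ofReal (exp (t • 𝒜) i j) := by
      intro t
      rw [← hmap t]
      simp [Matrix.mulVec_single, Matrix.map_apply]
    have : Tendsto (fun t : ℝ => (Complex.ofReal (exp (t • 𝒜) i j)).re) atTop (nhds 0) := by
      have hre := (Complex.continuous_re.tendsto (0 : ℂ))
      simpa [Function.comp_def] using hre.comp (hcij.congr fun t => heq t)
    simpa using this
  refine tendsto_pi_nhds.mpr ?_
  intro i
  rw [tendsto_pi_nhds]
  intro j
  simpa using hent i j

/-- transpose as a continuous linear map -/
noncomputable def transposeCLM : Matrix ι ι ℝ →L[ℝ] Matrix ι ι ℝ :=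
  LinearMap.toContinuousLinearMap
    { toFun := fun X => Xᵀ
      map_add' := fun X Y => Matrix.transpose_add X Y
      map_smul' := fun c X => Matrix.transpose_smul c X }

/-- quadratic-form-with-fixed-vector as a continuous linear map -/
noncomputable def quadCLM (x : ι → ℝ) : Matrix ι ι ℝ →L[ℝ] ℝ :=
  LinearMap.toContinuousLinearMap
    { toFun := fun X => x ⬝ᵥ (X *ᵥ x)
      map_add' := fun X Y => by simp [Matrix.add_mulVec, dotProduct_add]
      map_smul' := fun c X => by simp [Matrix.smul_mulVec, dotProduct_smul] }

lemma lyapunov_psd (𝒜 D : Matrix ι ι ℝ)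
    (hH : ∀ μ : ℂ, ((𝒜.map Complex.ofReal).charpoly).IsRoot μ → μ.re < 0)
    (hD : Dᵀ = D) (hW : (-(𝒜ᵀ * D + D * 𝒜)).PosSemidef) : D.PosSemidef := by
  refine Matrix.posSemidef_iff_dotProduct_mulVec.mpr ⟨?_, ?_⟩
  · rw [Matrix.IsHermitian, Matrix.conjTranspose_eq_transpose_of_trivial]
    exact hD
  intro x
  rw [star_trivial]
  set e : ℝ → Matrix ι ι ℝ := fun t => exp (t • 𝒜) with he_def
  have he : ∀ t : ℝ, HasDerivAt e (e t * 𝒜) t := fun t => hasDerivAt_exp_smul_const 𝒜 t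
  have hcomm : ∀ t : ℝ, e t * 𝒜 = 𝒜 * e t := fun t =>
    (he t).unique (hasDerivAt_exp_smul_const' 𝒜 t)
  set φ : ℝ → ℝ := fun t => x ⬝ᵥ (((e t)ᵀ * D * e t) *ᵥ x) with hφ_def
  -- φ tends to 0
  have htend : Tendsto φ atTop (nhds 0) := by
    have h0 : Tendsto e atTop (nhds 0) := decay_real 𝒜 hH
    have hQ : Continuous fun X : Matrix ι ι ℝ => x ⬝ᵥ ((Xᵀ * D * X) *ᵥ x) := by
      refine Continuous.dotProduct continuous_const ?_
      exact Continuous.matrix_mulVec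
        (((Continuous.matrix_transpose continuous_id).matrix_mul continuous_const).matrix_mul
          continuous_id) continuous_const
    have := (hQ.tendsto 0).comp h0
    simpa [Matrix.zero_mul, Matrix.mul_zero, Function.comp_def] using this
  -- derivative of φ
  have hderiv : ∀ t : ℝ, HasDerivAt φ
      ((e t *ᵥ x) ⬝ᵥ ((𝒜ᵀ * D + D * 𝒜) *ᵥ (e t *ᵥ x))) t := by
    intro t
    have hT : HasDerivAt (fun s => (e s)ᵀ) ((e t * 𝒜)ᵀ) t := by
      have := (transposeCLM (ι := ι)).hasFDerivAt.comp_hasDerivAt t (he t)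
      exact this
    have hTD : HasDerivAt (fun s => (e s)ᵀ * D) ((e t * 𝒜)ᵀ * D) t := hT.mul_const D
    have hfull : HasDerivAt (fun s => (e s)ᵀ * D * e s)
        ((e t * 𝒜)ᵀ * D * e t + (e t)ᵀ * D * (e t * 𝒜)) t := hTD.mul (he t)
    have hφd := (quadCLM x).hasFDerivAt.comp_hasDerivAt t hfull
    have hrw : quadCLM x ((e t * 𝒜)ᵀ * D * e t + (e t)ᵀ * D * (e t * 𝒜))
        = (e t *ᵥ x) ⬝ᵥ ((𝒜ᵀ * D + D * 𝒜) *ᵥ (e t *ᵥ x)) := by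
      have hmat : (e t * 𝒜)ᵀ * D * e t + (e t)ᵀ * D * (e t * 𝒜)
          = (e t)ᵀ * ((𝒜ᵀ * D + D * 𝒜) * e t) := by
        have hcT : 𝒜ᵀ * (e t)ᵀ = (e t)ᵀ * 𝒜ᵀ := by
          rw [← Matrix.transpose_mul, ← Matrix.transpose_mul, hcomm t]
        rw [Matrix.transpose_mul, hcomm t, hcT]
        noncomm_ring
      show x ⬝ᵥ ((_ : Matrix ι ι ℝ) *ᵥ x) = _
      rw [hmat, ← Matrix.mulVec_mulVec, Matrix.dotProduct_mulVec x ((e t)ᵀ),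
        Matrix.vecMul_transpose, Matrix.mulVec_mulVec]
    erw [hrw] at hφd
    have : φ = fun s => quadCLM x ((e s)ᵀ * D * e s) := by
      funext s; rfl
    rw [this]
    exact hφd
  have hnonpos : ∀ t : ℝ, (e t *ᵥ x) ⬝ᵥ ((𝒜ᵀ * D + D * 𝒜) *ᵥ (e t *ᵥ x)) ≤ 0 := by
    intro t
    have := hW.dotProduct_mulVec_nonneg (e t *ᵥ x)
    rw [star_trivial, Matrix.neg_mulVec, dotProduct_neg] at this
    linarith
  have hanti : Antitone φ := by
    refine antitone_of_deriv_nonpos (fun t => (hderiv t).differentiableAt) fun t => ?_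
    rw [(hderiv t).deriv]
    exact hnonpos t
  have hφ0 : 0 ≤ φ 0 :=
    le_of_tendsto htend (Filter.eventually_atTop.mpr ⟨0, fun t ht => hanti ht⟩)
  have : φ 0 = x ⬝ᵥ (D *ᵥ x) := by
    have : e 0 = 1 := by rw [he_def]; simp [exp_zero]
    rw [hφ_def]
    simp [this]
  rw [this] at hφ0
  exact hφ0


section KroneckerAux

open Kronecker

variable {a b : Type*} [Fintype a] [Fintype b]

lemma sub_kron (A B : Matrix a a ℝ) (K : Matrix b b ℝ) :
    (A - B) ⊗ₖ K = A ⊗ₖ K - B ⊗ₖ K := by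
  ext i j
  simp [Matrix.kroneckerMap_apply, sub_mul]

lemma add_kron (A B : Matrix a a ℝ) (K : Matrix b b ℝ) :
    (A + B) ⊗ₖ K = A ⊗ₖ K + B ⊗ₖ K := by
  ext i j
  simp [Matrix.kroneckerMap_apply, add_mul]

lemma kron_neg (A : Matrix a a ℝ) (K : Matrix b b ℝ) :
    A ⊗ₖ (-K) = -(A ⊗ₖ K) := by
  ext i j
  simp [Matrix.kroneckerMap_apply]

lemma kron_psd {A : Matrix a a ℝ} {K : Matrix b b ℝ} (hA : A.PosSemidef) (hK : K.PosSemidef) :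
    (A ⊗ₖ K).PosSemidef := by
  exact hA.kronecker hK

end KroneckerAux

open Kronecker

/-- the generalized edge observability Gramian `Π^o ⊗ Q` bounds the
edge observability Gramian `Q̄_f` from above: `Q̄_f ⪯ Π^o ⊗ Q`. -/
theorem generalized_edge_observability_gramian_bound
    (n k m₀ p : ℕ) (hn : 2 ≤ n)
    (Q J R : Matrix (Fin k) (Fin k) ℝ) (B : Matrix (Fin k) (Fin m₀) ℝ)
    (hQ : Q.PosDef) (hJ : Jᵀ = -J) (hR : R.PosSemidef)
    (A : Matrix (Fin k) (Fin k) ℝ) (hA : A = (J - R) * Q)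
    (C : Matrix (Fin m₀) (Fin k) ℝ) (hC : C = Bᵀ * Q)
    (E F : Matrix (Fin n) (Fin (n-1)) ℝ)
    (Le : Matrix (Fin (n-1)) (Fin (n-1)) ℝ) (hLe : Le = Eᵀ * F)
    (H : Matrix (Fin p) (Fin n) ℝ)
    (𝒜 : Matrix (Fin (n-1) × Fin k) (Fin (n-1) × Fin k) ℝ)
    (h𝒜 : 𝒜 = (1 : Matrix (Fin (n-1)) (Fin (n-1)) ℝ) ⊗ₖ A - Le ⊗ₖ (B * C))
    -- 𝒜 is Hurwitz
    (hHurwitz : ∀ μ : ℂ, ((𝒜.map (Complex.ofReal)).charpoly).IsRoot μ → μ.re < 0)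
    -- the edge observability Gramian
    (Qf : Matrix (Fin (n-1) × Fin k) (Fin (n-1) × Fin k) ℝ)
    (hQfsymm : Qfᵀ = Qf)
    (hQf : 𝒜ᵀ * Qf + Qf * 𝒜 + ((H * F) ⊗ₖ C)ᵀ * ((H * F) ⊗ₖ C) = 0)
    -- the generalized edge observability Gramian certificate
    (Po : Matrix (Fin (n-1)) (Fin (n-1)) ℝ)
    (hPodiag : Po.IsDiag) (hPopsd : Po.PosSemidef)
    (hPoineq : (Leᵀ * Po + Po * Le - Fᵀ * Hᵀ * H * F).PosSemidef) :
    (Po ⊗ₖ Q - Qf).PosSemidef := by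
  classical
  have hQs : Qᵀ = Q := by
    have h : Qᴴ = Q := hQ.isHermitian
    rwa [Matrix.conjTranspose_eq_transpose_of_trivial] at h
  have hRs : Rᵀ = R := by
    have h : Rᴴ = R := hR.isHermitian
    rwa [Matrix.conjTranspose_eq_transpose_of_trivial] at h
  have hPos : Poᵀ = Po := by
    have h : Poᴴ = Po := hPopsd.isHermitian
    rwa [Matrix.conjTranspose_eq_transpose_of_trivial] at h
  set D : Matrix (Fin (n-1) × Fin k) (Fin (n-1) × Fin k) ℝ := Po ⊗ₖ Q - Qf with hD_def
  have hDsym : Dᵀ = D := by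
    rw [hD_def, Matrix.transpose_sub, ← Matrix.kroneckerMap_transpose, hPos, hQs, hQfsymm]
  -- basic port-Hamiltonian identities
  have hBQ : (B * C)ᵀ * Q = Cᵀ * C := by
    rw [Matrix.transpose_mul, Matrix.mul_assoc, ← hC]
  have hQC : Q * (B * C) = Cᵀ * C := by
    have hQB : Q * B = Cᵀ := by rw [hC, Matrix.transpose_mul, hQs, Matrix.transpose_transpose]
    rw [← Matrix.mul_assoc, hQB]
  have hAQQA : Aᵀ * Q + Q * A = -(Q * R * Q) + -(Q * R * Q) := by
    have hAT : Aᵀ = Q * (-J - R) := by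
      rw [hA, Matrix.transpose_mul, Matrix.transpose_sub, hJ, hRs, hQs]
    rw [hAT, hA]
    noncomm_ring
  -- Lyapunov-type identities
  have hS1 : 𝒜ᵀ * (Po ⊗ₖ Q) = Po ⊗ₖ (Aᵀ * Q) - (Leᵀ * Po) ⊗ₖ (Cᵀ * C) := by
    rw [h𝒜, Matrix.transpose_sub, ← Matrix.kroneckerMap_transpose,
      ← Matrix.kroneckerMap_transpose, Matrix.transpose_one, Matrix.sub_mul,
      ← Matrix.mul_kronecker_mul, ← Matrix.mul_kronecker_mul, Matrix.one_mul, hBQ]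
  have hS2 : (Po ⊗ₖ Q) * 𝒜 = Po ⊗ₖ (Q * A) - (Po * Le) ⊗ₖ (Cᵀ * C) := by
    rw [h𝒜, Matrix.mul_sub, ← Matrix.mul_kronecker_mul, ← Matrix.mul_kronecker_mul,
      Matrix.mul_one, hQC]
  have hS3 : 𝒜ᵀ * Qf + Qf * 𝒜 = -((Fᵀ * Hᵀ * H * F) ⊗ₖ (Cᵀ * C)) := by
    have h1 : ((H * F) ⊗ₖ C)ᵀ * ((H * F) ⊗ₖ C) = (Fᵀ * Hᵀ * H * F) ⊗ₖ (Cᵀ * C) := by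
      have h2 : (H * F)ᵀ * (H * F) = Fᵀ * Hᵀ * H * F := by
        rw [Matrix.transpose_mul, ← Matrix.mul_assoc]
      rw [← Matrix.kroneckerMap_transpose, ← Matrix.mul_kronecker_mul, h2]
    rw [← h1]
    exact eq_neg_of_add_eq_zero_left hQf
  have hsum : Po ⊗ₖ (Aᵀ * Q) + Po ⊗ₖ (Q * A)
      = -(Po ⊗ₖ (Q * R * Q)) + -(Po ⊗ₖ (Q * R * Q)) := by
    rw [← Matrix.kronecker_add, hAQQA, Matrix.kronecker_add, kron_neg]
  have key : -(𝒜ᵀ * D + D * 𝒜)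
      = ((Po ⊗ₖ (Q * R * Q)) + (Po ⊗ₖ (Q * R * Q)))
        + ((Leᵀ * Po + Po * Le - Fᵀ * Hᵀ * H * F) ⊗ₖ (Cᵀ * C)) := by
    have hexp : 𝒜ᵀ * D + D * 𝒜
        = (𝒜ᵀ * (Po ⊗ₖ Q) + (Po ⊗ₖ Q) * 𝒜) - (𝒜ᵀ * Qf + Qf * 𝒜) := by
      rw [hD_def]
      noncomm_ring
    have hG : (Leᵀ * Po + Po * Le - Fᵀ * Hᵀ * H * F) ⊗ₖ (Cᵀ * C)
        = (Leᵀ * Po) ⊗ₖ (Cᵀ * C) + (Po * Le) ⊗ₖ (Cᵀ * C)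
          - (Fᵀ * Hᵀ * H * F) ⊗ₖ (Cᵀ * C) := by
      rw [sub_kron, add_kron]
    calc -(𝒜ᵀ * D + D * 𝒜)
        = -(Po ⊗ₖ (Aᵀ * Q) + Po ⊗ₖ (Q * A))
          + ((Leᵀ * Po) ⊗ₖ (Cᵀ * C) + (Po * Le) ⊗ₖ (Cᵀ * C)
            - (Fᵀ * Hᵀ * H * F) ⊗ₖ (Cᵀ * C)) := by
          rw [hexp, hS1, hS2, hS3]
          abel
      _ = ((Po ⊗ₖ (Q * R * Q)) + (Po ⊗ₖ (Q * R * Q)))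
          + ((Leᵀ * Po + Po * Le - Fᵀ * Hᵀ * H * F) ⊗ₖ (Cᵀ * C)) := by
          rw [hsum, hG]
          abel
  have hQRQ : (Q * R * Q).PosSemidef := by
    have h := hR.conjTranspose_mul_mul_same Q
    rwa [Matrix.conjTranspose_eq_transpose_of_trivial, hQs] at h
  have hCC : (Cᵀ * C).PosSemidef := by
    have h := Matrix.posSemidef_conjTranspose_mul_self C
    rwa [Matrix.conjTranspose_eq_transpose_of_trivial] at h
  have hWpsd : (-(𝒜ᵀ * D + D * 𝒜)).PosSemidef := by
    rw [key]
    exact ((kron_psd hPopsd hQRQ).add (kron_psd hPopsd hQRQ)).add (kron_psd hPoineq hCC)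
  exact lyapunov_psd 𝒜 D hHurwitz hDsym hWpsd
end

section
/- Let n ≥ 3 and let w_{ij} be nonnegative weights with w_{ii} = 0 whose underlying undirected graph is a spanning tree with incidence matrix E ∈ ℝ^{n×(n−1)} and weighted incidence matrix F, ordered so that the last edge connects vertices i = n−1 and j = n with w_{ij} + w_{ji} > 0. Let L be the weighted Laplacian and let V, W ∈ ℝ^{n×(n−1)} be the clustering projection matrices. Then WᵀLV = F̂ Êᵀ, where Ê ∈ ℝ^{(n−1)×(n−2)} is obtained from E by deleting the last column and replacing the last two rows by their sum, and F̂ ∈ ℝ^{(n−1)×(n−2)} is obtained from F by deleting the last column and replacing its last two rows F_{i0}, F_{j0} by (w_{ji}F_{i0} + w_{ij}F_{j0})/(w_{ij} + w_{ji}). -/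
open Matrix

/-- one-step clustering of the two vertices joined by the last edge:
`Wᵀ L V = F̂ Êᵀ`, where `Ê` is obtained from `E` by deleting the last column and summing
the last two rows, and `F̂` from `F` by deleting the last column and replacing the last
two rows by their convex combination with weights `w_ji/(w_ij+w_ji)`, `w_ij/(w_ij+w_ji)`. -/
theorem clustered_laplacian_factorization
    (n : ℕ) (hn : 3 ≤ n)
    -- weights of the last edge, connecting vertices n-1 and n: a = w_ij, b = w_ji
    (a b : ℝ) (ha : 0 ≤ a) (hb : 0 ≤ b) (hab : 0 < a + b)
    (ε : ℝ) (hε : ε = 1 ∨ ε = -1)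
    -- block structure of the incidence and weighted incidence matrices
    (E00 F00 : Matrix (Fin (n-2)) (Fin (n-2)) ℝ)
    (Ei0 Ej0 Fi0 Fj0 : Matrix (Fin 1) (Fin (n-2)) ℝ)
    (E F : Matrix (Fin (n-2) ⊕ (Fin 1 ⊕ Fin 1)) (Fin (n-2) ⊕ Fin 1) ℝ)
    (hE : E = Matrix.fromBlocks E00 0 (Matrix.fromRows Ei0 Ej0)
      (Matrix.fromRows (ε • (1 : Matrix (Fin 1) (Fin 1) ℝ))
        ((-ε) • (1 : Matrix (Fin 1) (Fin 1) ℝ))))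
    (hF : F = Matrix.fromBlocks F00 0 (Matrix.fromRows Fi0 Fj0)
      (Matrix.fromRows ((a * ε) • (1 : Matrix (Fin 1) (Fin 1) ℝ))
        ((-(b * ε)) • (1 : Matrix (Fin 1) (Fin 1) ℝ))))
    -- the underlying undirected graph is a spanning tree
    (hrankE : E.rank = n - 1)
    -- the weighted Laplacian and its factorization
    (L : Matrix (Fin (n-2) ⊕ (Fin 1 ⊕ Fin 1)) (Fin (n-2) ⊕ (Fin 1 ⊕ Fin 1)) ℝ)
    (hL : L = F * Eᵀ)
    -- the clustering projection matrices
    (V W : Matrix (Fin (n-2) ⊕ (Fin 1 ⊕ Fin 1)) (Fin (n-2) ⊕ Fin 1) ℝ)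
    (hV : V = Matrix.fromBlocks 1 0 0
      (Matrix.fromRows (1 : Matrix (Fin 1) (Fin 1) ℝ) (1 : Matrix (Fin 1) (Fin 1) ℝ)))
    (hW : W = Matrix.fromBlocks 1 0 0
      (Matrix.fromRows ((b / (a + b)) • (1 : Matrix (Fin 1) (Fin 1) ℝ))
        ((a / (a + b)) • (1 : Matrix (Fin 1) (Fin 1) ℝ))))
    -- the clustered incidence-type matrices
    (Ehat Fhat : Matrix (Fin (n-2) ⊕ Fin 1) (Fin (n-2)) ℝ)
    (hEhat : Ehat = Matrix.fromRows E00 (Ei0 + Ej0))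
    (hFhat : Fhat = Matrix.fromRows F00
      ((b / (a + b)) • Fi0 + (a / (a + b)) • Fj0)) :
    Wᵀ * L * V = Fhat * Ehatᵀ := by
  subst hE hF hL hV hW hEhat hFhat
  have h1 : (Matrix.fromBlocks (1 : Matrix (Fin (n-2)) (Fin (n-2)) ℝ) 0 0
      (Matrix.fromRows ((b / (a + b)) • (1 : Matrix (Fin 1) (Fin 1) ℝ))
        ((a / (a + b)) • (1 : Matrix (Fin 1) (Fin 1) ℝ))))ᵀ *
      Matrix.fromBlocks F00 0 (Matrix.fromRows Fi0 Fj0)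
        (Matrix.fromRows ((a * ε) • (1 : Matrix (Fin 1) (Fin 1) ℝ))
          ((-(b * ε)) • (1 : Matrix (Fin 1) (Fin 1) ℝ)))
      = Matrix.fromBlocks F00 0
        ((b / (a + b)) • Fi0 + (a / (a + b)) • Fj0) 0 := by
    rw [Matrix.fromBlocks_transpose, Matrix.transpose_fromRows,
      Matrix.fromBlocks_multiply]
    simp only [Matrix.fromCols_mul_fromRows, Matrix.transpose_smul,
      Matrix.transpose_one, Matrix.smul_mul, Matrix.one_mul, Matrix.mul_one,
      Matrix.transpose_zero, Matrix.zero_mul, Matrix.mul_zero, add_zero, zero_add,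
      smul_smul, ← add_smul]
    rw [show b / (a + b) * (a * ε) + a / (a + b) * -(b * ε) = 0 by ring, zero_smul]
  have h2 : (Matrix.fromBlocks E00 0 (Matrix.fromRows Ei0 Ej0)
      (Matrix.fromRows (ε • (1 : Matrix (Fin 1) (Fin 1) ℝ))
        ((-ε) • (1 : Matrix (Fin 1) (Fin 1) ℝ))))ᵀ *
      Matrix.fromBlocks (1 : Matrix (Fin (n-2)) (Fin (n-2)) ℝ) 0 0
        (Matrix.fromRows (1 : Matrix (Fin 1) (Fin 1) ℝ) (1 : Matrix (Fin 1) (Fin 1) ℝ))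
      = Matrix.fromBlocks E00ᵀ (Ei0 + Ej0)ᵀ 0 0 := by
    rw [Matrix.fromBlocks_transpose, Matrix.transpose_fromRows, Matrix.transpose_fromRows,
      Matrix.fromBlocks_multiply]
    simp only [Matrix.fromCols_mul_fromRows, Matrix.transpose_smul,
      Matrix.transpose_one, Matrix.smul_mul, Matrix.one_mul, Matrix.mul_one,
      Matrix.transpose_zero, Matrix.zero_mul, Matrix.mul_zero, add_zero, zero_add,
      Matrix.transpose_add, ← add_smul]
    rw [show ε + -ε = (0:ℝ) by ring, zero_smul]
  rw [← Matrix.mul_assoc, Matrix.mul_assoc (_ * _), h1, h2, Matrix.transpose_fromRows,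
    Matrix.fromRows_mul_fromCols, Matrix.fromBlocks_multiply]
  simp [Matrix.add_mul, Matrix.smul_mul]
end

section
/- In the one-step clustering setup on a spanning tree (n ≥ 3 vertices, weights w_{ij} ≥ 0, last edge connecting vertices n−1 and n with w_{ij} + w_{ji} > 0), assume additionally rank F = n − 1. Then the reduced incidence-type matrices satisfy rank Ê = n − 2 and rank F̂ = n − 2; consequently the reduced Laplacian L̂ = WᵀLV = F̂Êᵀ has rank n − 2, each column of Ê has exactly two nonzero entries, equal to 1 and −1, and thus the reduced network again has a spanning tree as underlying undirected graph and satisfies the directed-rooted-spanning-tree rank condition. -/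
open Matrix

lemma aux_rank_eq_card_iff_injective {m k : Type*} [Fintype m] [Fintype k]
    (A : Matrix m k ℝ) :
    A.rank = Fintype.card k ↔ Function.Injective A.mulVecLin := by
  have hdef : A.rank = Module.finrank ℝ (LinearMap.range A.mulVecLin) := rfl
  rw [hdef, ← LinearMap.ker_eq_bot]
  constructor
  · intro h
    have h2 := LinearMap.finrank_range_add_finrank_ker A.mulVecLin
    rw [Module.finrank_fintype_fun_eq_card, h] at h2
    have h3 : Module.finrank ℝ (LinearMap.ker A.mulVecLin) = 0 := by omega
    exact Submodule.finrank_eq_zero.mp h3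
  · intro h
    rw [LinearMap.ker_eq_bot] at h
    rw [LinearMap.finrank_range_of_inj h, Module.finrank_fintype_fun_eq_card]

lemma aux_rank_mul_of_inj {m k o : Type*} [Fintype m] [Fintype k] [Fintype o]
    (A : Matrix m k ℝ) (B : Matrix k o ℝ) (hA : Function.Injective A.mulVecLin) :
    (A * B).rank = B.rank := by
  have hdef : (A * B).rank = Module.finrank ℝ (LinearMap.range (A * B).mulVecLin) := rfl
  rw [hdef, Matrix.mulVecLin_mul, LinearMap.range_comp]
  exact ((Submodule.equivMapOfInjective _ hA _).finrank_eq).symm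

/-- in the one-step clustering setup on a spanning tree, if additionally
`rank F = n - 1`, then `rank Ê = n - 2`, `rank F̂ = n - 2`, the reduced Laplacian
`L̂ = Wᵀ L V = F̂ Êᵀ` has rank `n - 2`, and each column of `Ê` has exactly two nonzero
entries, equal to `1` and `-1` (so the reduced network again has a spanning tree as
underlying undirected graph and satisfies the directed-rooted-spanning-tree rank
condition). -/
theorem clustered_network_spanning_tree
    (n : ℕ) (hn : 3 ≤ n)
    (a b : ℝ) (ha : 0 ≤ a) (hb : 0 ≤ b) (hab : 0 < a + b)
    (ε : ℝ) (hε : ε = 1 ∨ ε = -1)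
    (E00 F00 : Matrix (Fin (n-2)) (Fin (n-2)) ℝ)
    (Ei0 Ej0 Fi0 Fj0 : Matrix (Fin 1) (Fin (n-2)) ℝ)
    (E F : Matrix (Fin (n-2) ⊕ (Fin 1 ⊕ Fin 1)) (Fin (n-2) ⊕ Fin 1) ℝ)
    (hE : E = Matrix.fromBlocks E00 0 (Matrix.fromRows Ei0 Ej0)
      (Matrix.fromRows (ε • (1 : Matrix (Fin 1) (Fin 1) ℝ))
        ((-ε) • (1 : Matrix (Fin 1) (Fin 1) ℝ))))
    (hF : F = Matrix.fromBlocks F00 0 (Matrix.fromRows Fi0 Fj0)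
      (Matrix.fromRows ((a * ε) • (1 : Matrix (Fin 1) (Fin 1) ℝ))
        ((-(b * ε)) • (1 : Matrix (Fin 1) (Fin 1) ℝ))))
    -- E is an incidence matrix: each column has exactly two nonzero entries, 1 and -1
    (hEcols : ∀ l, ∃ i j, i ≠ j ∧ E i l = 1 ∧ E j l = -1 ∧
      ∀ i', i' ≠ i → i' ≠ j → E i' l = 0)
    -- spanning tree and directed-rooted-spanning-tree conditions
    (hrankE : E.rank = n - 1)
    (hrankF : F.rank = n - 1)
    (L : Matrix (Fin (n-2) ⊕ (Fin 1 ⊕ Fin 1)) (Fin (n-2) ⊕ (Fin 1 ⊕ Fin 1)) ℝ)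
    (hL : L = F * Eᵀ)
    (V W : Matrix (Fin (n-2) ⊕ (Fin 1 ⊕ Fin 1)) (Fin (n-2) ⊕ Fin 1) ℝ)
    (hV : V = Matrix.fromBlocks 1 0 0
      (Matrix.fromRows (1 : Matrix (Fin 1) (Fin 1) ℝ) (1 : Matrix (Fin 1) (Fin 1) ℝ)))
    (hW : W = Matrix.fromBlocks 1 0 0
      (Matrix.fromRows ((b / (a + b)) • (1 : Matrix (Fin 1) (Fin 1) ℝ))
        ((a / (a + b)) • (1 : Matrix (Fin 1) (Fin 1) ℝ))))
    (Ehat Fhat : Matrix (Fin (n-2) ⊕ Fin 1) (Fin (n-2)) ℝ)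
    (hEhat : Ehat = Matrix.fromRows E00 (Ei0 + Ej0))
    (hFhat : Fhat = Matrix.fromRows F00
      ((b / (a + b)) • Fi0 + (a / (a + b)) • Fj0))
    (Lhat : Matrix (Fin (n-2) ⊕ Fin 1) (Fin (n-2) ⊕ Fin 1) ℝ)
    (hLhat : Lhat = Wᵀ * L * V) :
    Ehat.rank = n - 2 ∧ Fhat.rank = n - 2 ∧
    Lhat = Fhat * Ehatᵀ ∧ Lhat.rank = n - 2 ∧
    ∀ l, ∃ i j, i ≠ j ∧ Ehat i l = 1 ∧ Ehat j l = -1 ∧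
      ∀ i', i' ≠ i → i' ≠ j → Ehat i' l = 0 := by
  have hab' : a + b ≠ 0 := ne_of_gt hab
  have hε2 : ε * ε = 1 := by rcases hε with rfl | rfl <;> norm_num
  have hcard : Fintype.card (Fin (n-2) ⊕ Fin 1) = n - 1 := by
    simp [Fintype.card_sum]; omega
  -- injectivity of E and F
  have injE : Function.Injective E.mulVecLin := by
    rw [← aux_rank_eq_card_iff_injective, hcard]; exact hrankE
  have injF : Function.Injective F.mulVecLin := by
    rw [← aux_rank_eq_card_iff_injective, hcard]; exact hrankF
  -- injectivity of Ehat
  have injEhat : Function.Injective Ehat.mulVecLin := by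
    rw [← LinearMap.ker_eq_bot, LinearMap.ker_eq_bot']
    intro x hx
    rw [Matrix.mulVecLin_apply, hEhat] at hx
    have hx0 : E00 *ᵥ x = 0 := by
      funext i; exact congrFun hx (Sum.inl i)
    have hxb : (Ei0 + Ej0) *ᵥ x = 0 := by
      funext i; exact congrFun hx (Sum.inr i)
    set s : ℝ := (Ei0 *ᵥ x) 0 with hs
    have hv : E.mulVecLin (Sum.elim x fun _ => -(ε * s)) = 0 := by
      rw [Matrix.mulVecLin_apply, hE, Matrix.fromBlocks_mulVec]
      funext r
      rcases r with r | r | r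
      · simp [hx0]
      · have hr : r = 0 := Subsingleton.elim r 0
        subst hr
        have h1 := congrFun hxb 0
        simp only [Matrix.fromRows_mulVec, Matrix.smul_mulVec, Matrix.one_mulVec,
          Matrix.add_mulVec, Pi.add_apply, Pi.smul_apply, Sum.elim_comp_inl, Sum.elim_comp_inr,
          Sum.elim_inr, Sum.elim_inl, Pi.zero_apply, smul_eq_mul] at h1 ⊢
        linear_combination (-s) * hε2
      · have hr : r = 0 := Subsingleton.elim r 0
        subst hr
        have h1 := congrFun hxb 0
        simp only [Matrix.fromRows_mulVec, Matrix.smul_mulVec, Matrix.one_mulVec,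
          Matrix.add_mulVec, Pi.add_apply, Pi.smul_apply, Sum.elim_comp_inl, Sum.elim_comp_inr,
          Sum.elim_inr, Sum.elim_inl, Pi.zero_apply, smul_eq_mul] at h1 ⊢
        linear_combination h1 + s * hε2
    have hv0 : (Sum.elim x fun _ => -(ε * s)) = 0 := injE (by simpa using hv)
    funext c
    exact congrFun hv0 (Sum.inl c)
  -- injectivity of Fhat
  have key : ∀ c : ℝ, (a + b) * c = 0 → c = 0 := by
    intro c hc
    rcases mul_eq_zero.mp hc with h | h
    · exact absurd h hab'
    · exact h
  have injFhat : Function.Injective Fhat.mulVecLin := by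
    rw [← LinearMap.ker_eq_bot, LinearMap.ker_eq_bot']
    intro x hx
    rw [Matrix.mulVecLin_apply, hFhat] at hx
    have hx0 : F00 *ᵥ x = 0 := by
      funext i; exact congrFun hx (Sum.inl i)
    have hxb : ((b / (a + b)) • Fi0 + (a / (a + b)) • Fj0) *ᵥ x = 0 := by
      funext i; exact congrFun hx (Sum.inr i)
    set s : ℝ := (Fi0 *ᵥ x) 0 with hs
    set u : ℝ := (Fj0 *ᵥ x) 0 with hu
    have hrel : b * s + a * u = 0 := by
      have h1 := congrFun hxb 0
      simp only [Matrix.add_mulVec, Matrix.smul_mulVec, Pi.add_apply, Pi.smul_apply,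
        smul_eq_mul, Pi.zero_apply] at h1
      have h2 : b * s + a * u = (a + b) * (b / (a + b) * s + a / (a + b) * u) := by
        field_simp
      rw [h2, h1, mul_zero]
    set t : ℝ := ε * (u - s) / (a + b) with htdef
    have hT : (a + b) * t = ε * (u - s) := by
      rw [htdef]
      field_simp
    have hv : F.mulVecLin (Sum.elim x fun _ => t) = 0 := by
      rw [Matrix.mulVecLin_apply, hF, Matrix.fromBlocks_mulVec]
      funext r
      rcases r with r | r | r
      · simp [hx0]
      · have hr : r = 0 := Subsingleton.elim r 0
        subst hr
        simp only [Matrix.fromRows_mulVec, Matrix.smul_mulVec, Matrix.one_mulVec,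
          Matrix.add_mulVec, Pi.add_apply, Pi.smul_apply, Sum.elim_comp_inl, Sum.elim_comp_inr,
          Sum.elim_inr, Sum.elim_inl, Pi.zero_apply, smul_eq_mul]
        refine key _ ?_
        linear_combination a * ε * hT + a * (u - s) * hε2 + hrel
      · have hr : r = 0 := Subsingleton.elim r 0
        subst hr
        simp only [Matrix.fromRows_mulVec, Matrix.smul_mulVec, Matrix.one_mulVec,
          Matrix.add_mulVec, Pi.add_apply, Pi.smul_apply, Sum.elim_comp_inl, Sum.elim_comp_inr,
          Sum.elim_inr, Sum.elim_inl, Pi.zero_apply, smul_eq_mul]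
        refine key _ ?_
        linear_combination (-(b * ε)) * hT + (-(b * (u - s))) * hε2 + hrel
    have hv0 : (Sum.elim x fun _ => t) = 0 := injF (by simpa using hv)
    funext c
    exact congrFun hv0 (Sum.inl c)
  -- ranks of Ehat and Fhat
  have hrkEhat : Ehat.rank = n - 2 := by
    have := (aux_rank_eq_card_iff_injective Ehat).mpr injEhat
    simpa using this
  have hrkFhat : Fhat.rank = n - 2 := by
    have := (aux_rank_eq_card_iff_injective Fhat).mpr injFhat
    simpa using this
  -- block computations
  have hWF : Wᵀ * F = Matrix.fromBlocks F00 0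
      ((b / (a + b)) • Fi0 + (a / (a + b)) • Fj0) 0 := by
    rw [hW, hF, Matrix.fromBlocks_transpose, Matrix.transpose_fromRows,
      Matrix.fromBlocks_multiply]
    refine Matrix.fromBlocks_inj.mpr ⟨?_, ?_, ?_, ?_⟩
    · simp
    · simp
    · rw [Matrix.fromCols_mul_fromRows]
      simp [Matrix.transpose_smul, Matrix.smul_mul]
    · rw [Matrix.fromCols_mul_fromRows]
      ext i j
      have hij' : i = j := Subsingleton.elim i j
      subst hij'
      simp [Matrix.mul_apply, Matrix.one_apply, Fin.sum_univ_one, Subsingleton.elim (0 : Fin 1) i]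
      ring
  have hVE : Vᵀ * E = Matrix.fromBlocks E00 0 (Ei0 + Ej0) 0 := by
    rw [hV, hE, Matrix.fromBlocks_transpose, Matrix.transpose_fromRows,
      Matrix.fromBlocks_multiply]
    refine Matrix.fromBlocks_inj.mpr ⟨?_, ?_, ?_, ?_⟩
    · simp
    · simp
    · rw [Matrix.fromCols_mul_fromRows]
      simp [Matrix.transpose_one]
    · rw [Matrix.fromCols_mul_fromRows]
      ext i j
      have hij' : i = j := Subsingleton.elim i j
      subst hij'
      simp [Matrix.mul_apply, Matrix.one_apply, Fin.sum_univ_one, Subsingleton.elim (0 : Fin 1) i]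
  have hLE : Lhat = Fhat * Ehatᵀ := by
    have h1 : Lhat = (Wᵀ * F) * (Vᵀ * E)ᵀ := by
      rw [hLhat, hL, Matrix.transpose_mul, Matrix.transpose_transpose]
      rw [← Matrix.mul_assoc, ← Matrix.mul_assoc]
    rw [h1, hWF, hVE, hFhat, hEhat, Matrix.fromBlocks_transpose, Matrix.transpose_fromRows,
      Matrix.fromBlocks_multiply, Matrix.fromRows_mul, Matrix.mul_fromCols,
      Matrix.mul_fromCols, Matrix.fromRows_fromCols_eq_fromBlocks]
    simp
  -- rank of Lhat
  have hrkLhat : Lhat.rank = n - 2 := by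
    rw [hLE, aux_rank_mul_of_inj Fhat Ehatᵀ injFhat, Matrix.rank_transpose, hrkEhat]
  refine ⟨hrkEhat, hrkFhat, hLE, hrkLhat, ?_⟩
  -- entry lemmas
  have hEa : ∀ r c, E (Sum.inl r) (Sum.inl c) = E00 r c := by intro r c; simp [hE]
  have hEb : ∀ (i : Fin 1) c, E (Sum.inr (Sum.inl i)) (Sum.inl c) = Ei0 i c := by
    intro i c; simp [hE]
  have hEc : ∀ (i : Fin 1) c, E (Sum.inr (Sum.inr i)) (Sum.inl c) = Ej0 i c := by
    intro i c; simp [hE]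
  have hHa : ∀ r c, Ehat (Sum.inl r) c = E00 r c := by intro r c; simp [hEhat]
  have hHb : ∀ (i : Fin 1) c, Ehat (Sum.inr i) c = Ei0 i c + Ej0 i c := by
    intro i c; simp [hEhat]
  intro l
  obtain ⟨i, j, hij, hi1, hj1, hz⟩ := hEcols (Sum.inl l)
  have hnz : ¬ (∀ r, Ehat r l = 0) := by
    intro hzero
    have h0 : Ehat.mulVecLin (Pi.single l 1) = Ehat.mulVecLin 0 := by
      simp only [Matrix.mulVecLin_apply, Matrix.mulVec_single, map_zero]
      funext r
      simp [hzero r]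
    have := congrFun (injEhat h0) l
    simp at this
  rcases i with r | i1 | i1 <;> rcases j with t' | j1 | j1
  · -- both top
    refine ⟨Sum.inl r, Sum.inl t', by simpa using hij, by rw [hHa, ← hEa]; exact hi1,
      by rw [hHa, ← hEa]; exact hj1, ?_⟩
    rintro (r' | i') h1 h2
    · rw [hHa, ← hEa]
      exact hz _ (by simpa using h1) (by simpa using h2)
    · rw [hHb, ← hEb, ← hEc]
      rw [hz _ (by simp) (by simp), hz _ (by simp) (by simp)]
      ring
  · -- i top, j = inr inl
    have hj0 : j1 = 0 := Subsingleton.elim _ _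
    subst hj0
    refine ⟨Sum.inl r, Sum.inr 0, by simp, by rw [hHa, ← hEa]; exact hi1, ?_, ?_⟩
    · rw [hHb, ← hEb, ← hEc, hj1, hz (Sum.inr (Sum.inr 0)) (by simp) (by simp)]
      ring
    · rintro (r' | i') h1 h2
      · rw [hHa, ← hEa]
        exact hz _ (by simpa using h1) (by simp)
      · exact absurd (congrArg Sum.inr (Subsingleton.elim i' 0)) h2
  · -- i top, j = inr inr
    have hj0 : j1 = 0 := Subsingleton.elim _ _
    subst hj0
    refine ⟨Sum.inl r, Sum.inr 0, by simp, by rw [hHa, ← hEa]; exact hi1, ?_, ?_⟩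
    · rw [hHb, ← hEb, ← hEc, hj1, hz (Sum.inr (Sum.inl 0)) (by simp) (by simp)]
      ring
    · rintro (r' | i') h1 h2
      · rw [hHa, ← hEa]
        exact hz _ (by simpa using h1) (by simp)
      · exact absurd (congrArg Sum.inr (Subsingleton.elim i' 0)) h2
  · -- i = inr inl, j top
    have hi0 : i1 = 0 := Subsingleton.elim _ _
    subst hi0
    refine ⟨Sum.inr 0, Sum.inl t', by simp, ?_, by rw [hHa, ← hEa]; exact hj1, ?_⟩
    · rw [hHb, ← hEb, ← hEc, hi1, hz (Sum.inr (Sum.inr 0)) (by simp) (by simp)]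
      ring
    · rintro (r' | i') h1 h2
      · rw [hHa, ← hEa]
        exact hz _ (by simp) (by simpa using h2)
      · exact absurd (congrArg Sum.inr (Subsingleton.elim i' 0)) h1
  · -- i = inr inl, j = inr inl : contradiction
    exact absurd (congrArg (fun z : Fin 1 =>
      (Sum.inr (Sum.inl z) : Fin (n-2) ⊕ (Fin 1 ⊕ Fin 1))) (Subsingleton.elim i1 j1)) hij
  · -- i = inr inl, j = inr inr : zero column, contradiction
    exfalso
    apply hnz
    rintro (r' | i')
    · rw [hHa, ← hEa]
      exact hz _ (by simp) (by simp)
    · have e1 : Ei0 i' l = 1 := by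
        rw [← hEb, Subsingleton.elim i' i1]; exact hi1
      have e2 : Ej0 i' l = -1 := by
        rw [← hEc, Subsingleton.elim i' j1]; exact hj1
      rw [hHb, e1, e2]
      ring
  · -- i = inr inr, j top
    have hi0 : i1 = 0 := Subsingleton.elim _ _
    subst hi0
    refine ⟨Sum.inr 0, Sum.inl t', by simp, ?_, by rw [hHa, ← hEa]; exact hj1, ?_⟩
    · rw [hHb, ← hEb, ← hEc, hi1, hz (Sum.inr (Sum.inl 0)) (by simp) (by simp)]
      ring
    · rintro (r' | i') h1 h2
      · rw [hHa, ← hEa]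
        exact hz _ (by simp) (by simpa using h2)
      · exact absurd (congrArg Sum.inr (Subsingleton.elim i' 0)) h1
  · -- i = inr inr, j = inr inl : zero column, contradiction
    exfalso
    apply hnz
    rintro (r' | i')
    · rw [hHa, ← hEa]
      exact hz _ (by simp) (by simp)
    · have e1 : Ei0 i' l = -1 := by
        rw [← hEb, Subsingleton.elim i' j1]; exact hj1
      have e2 : Ej0 i' l = 1 := by
        rw [← hEc, Subsingleton.elim i' i1]; exact hi1
      rw [hHb, e1, e2]
      ring
  · -- i = inr inr, j = inr inr : contradiction
    exact absurd (congrArg (fun z : Fin 1 =>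
      (Sum.inr (Sum.inr z) : Fin (n-2) ⊕ (Fin 1 ⊕ Fin 1))) (Subsingleton.elim i1 j1)) hij
end

section
/- In the one-step clustering setup on a spanning tree (n ≥ 3 vertices, weights w_{ij} ≥ 0, last edge connecting vertices n−1 and n with w_{ij} + w_{ji} > 0), partition the edge Laplacian L_e = EᵀF ∈ ℝ^{(n−1)×(n−1)} as L_e = [[L_{e,11}, L_{e,12}],[L_{e,21}, L_{e,22}]] where L_{e,22} ∈ ℝ is the last diagonal entry; then L_{e,22} = w_{ij} + w_{ji} ≠ 0, and the reduced edge Laplacian satisfies the Schur-complement formula L̂_e := ÊᵀF̂ = L_{e,11} − L_{e,12} L_{e,22}^{−1} L_{e,21}. -/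
open Matrix

/-- in the one-step clustering setup, the (2,2) block of the edge Laplacian
`L_e = EᵀF` is the scalar `w_ij + w_ji ≠ 0`, and the reduced edge Laplacian
`L̂_e = ÊᵀF̂` is the Schur complement `L_{e,11} - L_{e,12} L_{e,22}⁻¹ L_{e,21}`. -/
theorem clustered_edge_laplacian_schur
    (n : ℕ) (hn : 3 ≤ n)
    (a b : ℝ) (ha : 0 ≤ a) (hb : 0 ≤ b) (hab : 0 < a + b)
    (ε : ℝ) (hε : ε = 1 ∨ ε = -1)
    (E00 F00 : Matrix (Fin (n-2)) (Fin (n-2)) ℝ)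
    (Ei0 Ej0 Fi0 Fj0 : Matrix (Fin 1) (Fin (n-2)) ℝ)
    (E F : Matrix (Fin (n-2) ⊕ (Fin 1 ⊕ Fin 1)) (Fin (n-2) ⊕ Fin 1) ℝ)
    (hE : E = Matrix.fromBlocks E00 0 (Matrix.fromRows Ei0 Ej0)
      (Matrix.fromRows (ε • (1 : Matrix (Fin 1) (Fin 1) ℝ))
        ((-ε) • (1 : Matrix (Fin 1) (Fin 1) ℝ))))
    (hF : F = Matrix.fromBlocks F00 0 (Matrix.fromRows Fi0 Fj0)
      (Matrix.fromRows ((a * ε) • (1 : Matrix (Fin 1) (Fin 1) ℝ))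
        ((-(b * ε)) • (1 : Matrix (Fin 1) (Fin 1) ℝ))))
    (hrankE : E.rank = n - 1)
    -- the edge Laplacian
    (Le : Matrix (Fin (n-2) ⊕ Fin 1) (Fin (n-2) ⊕ Fin 1) ℝ)
    (hLe : Le = Eᵀ * F)
    -- the clustered incidence-type matrices
    (Ehat Fhat : Matrix (Fin (n-2) ⊕ Fin 1) (Fin (n-2)) ℝ)
    (hEhat : Ehat = Matrix.fromRows E00 (Ei0 + Ej0))
    (hFhat : Fhat = Matrix.fromRows F00
      ((b / (a + b)) • Fi0 + (a / (a + b)) • Fj0)) :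
    Le.toBlocks₂₂ = (a + b) • (1 : Matrix (Fin 1) (Fin 1) ℝ) ∧
    a + b ≠ 0 ∧
    Ehatᵀ * Fhat = Le.toBlocks₁₁ - Le.toBlocks₁₂ * (Le.toBlocks₂₂)⁻¹ * Le.toBlocks₂₁ := by
  have hab' : a + b ≠ 0 := ne_of_gt hab
  have hε2 : ε * ε = 1 := by rcases hε with h | h <;> simp [h]
  -- compute the block decomposition of Le
  have hLe' : Le = Matrix.fromBlocks
      (E00ᵀ * F00 + (Ei0ᵀ * Fi0 + Ej0ᵀ * Fj0))
      ((a * ε) • Ei0ᵀ + (-(b * ε)) • Ej0ᵀ)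
      (ε • Fi0 + (-ε) • Fj0)
      ((a + b) • (1 : Matrix (Fin 1) (Fin 1) ℝ)) := by
    have hB12 : Matrix.fromCols Ei0ᵀ Ej0ᵀ *
        Matrix.fromRows ((a * ε) • (1 : Matrix (Fin 1) (Fin 1) ℝ))
          ((-(b * ε)) • (1 : Matrix (Fin 1) (Fin 1) ℝ)) =
        (a * ε) • Ei0ᵀ + (-(b * ε)) • Ej0ᵀ := by
      rw [Matrix.fromCols_mul_fromRows]
      simp [Matrix.mul_smul]
    have hB21 : (Matrix.fromRows (ε • (1 : Matrix (Fin 1) (Fin 1) ℝ))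
          ((-ε) • (1 : Matrix (Fin 1) (Fin 1) ℝ)))ᵀ * Matrix.fromRows Fi0 Fj0 =
        ε • Fi0 + (-ε) • Fj0 := by
      rw [Matrix.transpose_fromRows, Matrix.fromCols_mul_fromRows]
      simp [Matrix.smul_mul]
    have hB22 : (Matrix.fromRows (ε • (1 : Matrix (Fin 1) (Fin 1) ℝ))
          ((-ε) • (1 : Matrix (Fin 1) (Fin 1) ℝ)))ᵀ *
        Matrix.fromRows ((a * ε) • (1 : Matrix (Fin 1) (Fin 1) ℝ))
          ((-(b * ε)) • (1 : Matrix (Fin 1) (Fin 1) ℝ)) =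
        (a + b) • (1 : Matrix (Fin 1) (Fin 1) ℝ) := by
      rw [Matrix.transpose_fromRows, Matrix.fromCols_mul_fromRows]
      simp only [Matrix.transpose_smul, Matrix.transpose_one, Matrix.smul_mul,
        Matrix.mul_smul, Matrix.one_mul, smul_smul, ← add_smul]
      congr 1
      rcases hε with h | h <;> rw [h] <;> ring
    rw [hLe, hE, hF, Matrix.fromBlocks_transpose, Matrix.fromBlocks_multiply,
      Matrix.transpose_fromRows, hB12, hB21, hB22,
      Matrix.fromCols_mul_fromRows]
    simp
  have h11 : Le.toBlocks₁₁ = E00ᵀ * F00 + (Ei0ᵀ * Fi0 + Ej0ᵀ * Fj0) := by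
    rw [hLe']; rfl
  have h12 : Le.toBlocks₁₂ = (a * ε) • Ei0ᵀ + (-(b * ε)) • Ej0ᵀ := by
    rw [hLe']; rfl
  have h21 : Le.toBlocks₂₁ = ε • Fi0 + (-ε) • Fj0 := by
    rw [hLe']; rfl
  have h22 : Le.toBlocks₂₂ = (a + b) • (1 : Matrix (Fin 1) (Fin 1) ℝ) := by
    rw [hLe']; rfl
  refine ⟨h22, hab', ?_⟩
  have hinv : (Le.toBlocks₂₂)⁻¹ = (a + b)⁻¹ • (1 : Matrix (Fin 1) (Fin 1) ℝ) := by
    rw [h22]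
    apply Matrix.inv_eq_right_inv
    rw [smul_mul_smul_comm, one_mul, mul_inv_cancel₀ hab', one_smul]
  rw [hinv, h11, h12, h21, hEhat, hFhat, Matrix.transpose_fromRows,
    Matrix.fromCols_mul_fromRows]
  ext i j
  simp [Matrix.mul_apply, Matrix.add_apply, Matrix.sub_apply, Matrix.smul_apply,
    Matrix.one_apply, Fin.sum_univ_one, Matrix.transpose_apply, Finset.mul_sum,
    Finset.sum_add_distrib, mul_add, add_mul]
  rcases hε with h | h <;> subst h <;> field_simp <;> ring
end

section
/- In the one-step clustering setup on a spanning tree (n ≥ 3 vertices, weights w_{ij} ≥ 0, last edge connecting vertices n−1 and n with w_{ij} + w_{ji} > 0), let G ∈ ℝ^{n×q} and H ∈ ℝ^{p×n}, and partition G_e := EᵀG = [G_{e,1}; G_{e,2}] (G_{e,2} ∈ ℝ^{1×q} the last row), H_f := HF = [H_{f,1}, H_{f,2}] (H_{f,2} ∈ ℝ^{p×1} the last column), and L_e := EᵀF = [[L_{e,11}, L_{e,12}],[L_{e,21}, L_{e,22}]] with scalar L_{e,22} = w_{ij} + w_{ji}. Then the reduced matrices satisfy Ĝ_e := ÊᵀWᵀG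 = G_{e,1} − L_{e,12} L_{e,22}^{−1} G_{e,2} and Ĥ_f := H V F̂ = H_{f,1} − H_{f,2} L_{e,22}^{−1} L_{e,21}. -/
open Matrix

set_option maxHeartbeats 2000000 in
/-- in the one-step clustering setup, the reduced input and output matrices
of the (dual) edge system are Schur complements:
`Ĝ_e = ÊᵀWᵀG = G_{e,1} - L_{e,12} L_{e,22}⁻¹ G_{e,2}` and
`Ĥ_f = H V F̂ = H_{f,1} - H_{f,2} L_{e,22}⁻¹ L_{e,21}`. -/
theorem clustered_edge_io_schur
    (n q p : ℕ) (hn : 3 ≤ n)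
    (a b : ℝ) (ha : 0 ≤ a) (hb : 0 ≤ b) (hab : 0 < a + b)
    (ε : ℝ) (hε : ε = 1 ∨ ε = -1)
    (E00 F00 : Matrix (Fin (n-2)) (Fin (n-2)) ℝ)
    (Ei0 Ej0 Fi0 Fj0 : Matrix (Fin 1) (Fin (n-2)) ℝ)
    (E F : Matrix (Fin (n-2) ⊕ (Fin 1 ⊕ Fin 1)) (Fin (n-2) ⊕ Fin 1) ℝ)
    (hE : E = Matrix.fromBlocks E00 0 (Matrix.fromRows Ei0 Ej0)
      (Matrix.fromRows (ε • (1 : Matrix (Fin 1) (Fin 1) ℝ))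
        ((-ε) • (1 : Matrix (Fin 1) (Fin 1) ℝ))))
    (hF : F = Matrix.fromBlocks F00 0 (Matrix.fromRows Fi0 Fj0)
      (Matrix.fromRows ((a * ε) • (1 : Matrix (Fin 1) (Fin 1) ℝ))
        ((-(b * ε)) • (1 : Matrix (Fin 1) (Fin 1) ℝ))))
    (hrankE : E.rank = n - 1)
    -- external input and output distribution matrices
    (G : Matrix (Fin (n-2) ⊕ (Fin 1 ⊕ Fin 1)) (Fin q) ℝ)
    (H : Matrix (Fin p) (Fin (n-2) ⊕ (Fin 1 ⊕ Fin 1)) ℝ)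
    -- the edge Laplacian and the partitioned edge input/output matrices
    (Le : Matrix (Fin (n-2) ⊕ Fin 1) (Fin (n-2) ⊕ Fin 1) ℝ)
    (hLe : Le = Eᵀ * F)
    (Ge1 : Matrix (Fin (n-2)) (Fin q) ℝ) (hGe1 : Ge1 = (Eᵀ * G).submatrix Sum.inl id)
    (Ge2 : Matrix (Fin 1) (Fin q) ℝ) (hGe2 : Ge2 = (Eᵀ * G).submatrix Sum.inr id)
    (Hf1 : Matrix (Fin p) (Fin (n-2)) ℝ) (hHf1 : Hf1 = (H * F).submatrix id Sum.inl)
    (Hf2 : Matrix (Fin p) (Fin 1) ℝ) (hHf2 : Hf2 = (H * F).submatrix id Sum.inr)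
    -- the clustering projection matrices and clustered matrices
    (V W : Matrix (Fin (n-2) ⊕ (Fin 1 ⊕ Fin 1)) (Fin (n-2) ⊕ Fin 1) ℝ)
    (hV : V = Matrix.fromBlocks 1 0 0
      (Matrix.fromRows (1 : Matrix (Fin 1) (Fin 1) ℝ) (1 : Matrix (Fin 1) (Fin 1) ℝ)))
    (hW : W = Matrix.fromBlocks 1 0 0
      (Matrix.fromRows ((b / (a + b)) • (1 : Matrix (Fin 1) (Fin 1) ℝ))
        ((a / (a + b)) • (1 : Matrix (Fin 1) (Fin 1) ℝ))))
    (Ehat Fhat : Matrix (Fin (n-2) ⊕ Fin 1) (Fin (n-2)) ℝ)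
    (hEhat : Ehat = Matrix.fromRows E00 (Ei0 + Ej0))
    (hFhat : Fhat = Matrix.fromRows F00
      ((b / (a + b)) • Fi0 + (a / (a + b)) • Fj0)) :
    Ehatᵀ * (Wᵀ * G) = Ge1 - Le.toBlocks₁₂ * (Le.toBlocks₂₂)⁻¹ * Ge2 ∧
    H * V * Fhat = Hf1 - Hf2 * (Le.toBlocks₂₂)⁻¹ * Le.toBlocks₂₁ := by
  have hs : a + b ≠ 0 := ne_of_gt hab
  have h22 : Le.toBlocks₂₂ = (a + b) • (1 : Matrix (Fin 1) (Fin 1) ℝ) := by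
    subst hLe hE hF
    ext i j
    fin_cases i; fin_cases j
    rcases hε with h | h <;> subst h <;>
      simp [Matrix.toBlocks₂₂, Matrix.mul_apply, Fintype.sum_sum_type] <;> ring
  have hinv : (Le.toBlocks₂₂)⁻¹ = (a + b)⁻¹ • (1 : Matrix (Fin 1) (Fin 1) ℝ) := by
    rw [h22]
    apply Matrix.inv_eq_right_inv
    rw [Matrix.smul_mul, Matrix.mul_smul, smul_smul, mul_inv_cancel₀ hs, one_smul,
      Matrix.mul_one]
  rw [hinv]
  subst hLe hGe1 hGe2 hHf1 hHf2 hEhat hFhat hV hW hE hF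
  constructor
  · ext k l
    rcases hε with h | h <;> subst h <;>
      simp [Matrix.toBlocks₁₂, Matrix.mul_apply, Fintype.sum_sum_type, Fin.sum_univ_one,
        Matrix.fromBlocks_apply₁₁, Matrix.fromBlocks_apply₁₂, Matrix.fromBlocks_apply₂₁,
        Matrix.fromBlocks_apply₂₂, Matrix.fromRows_apply_inl, Matrix.fromRows_apply_inr,
        Matrix.transpose_apply, Matrix.one_apply, mul_ite, ite_mul,
        Finset.sum_ite_eq, Finset.sum_ite_eq', mul_add, add_mul, Finset.sum_add_distrib] <;>
      field_simp <;> ring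
  · ext k l
    rcases hε with h | h <;> subst h <;>
      simp [Matrix.toBlocks₂₁, Matrix.mul_apply, Fintype.sum_sum_type, Fin.sum_univ_one,
        Matrix.fromBlocks_apply₁₁, Matrix.fromBlocks_apply₁₂, Matrix.fromBlocks_apply₂₁,
        Matrix.fromBlocks_apply₂₂, Matrix.fromRows_apply_inl, Matrix.fromRows_apply_inr,
        Matrix.transpose_apply, Matrix.one_apply, mul_ite, ite_mul,
        Finset.sum_ite_eq, Finset.sum_ite_eq', mul_add, add_mul, Finset.sum_add_distrib] <;>
      field_simp <;> ring
end

section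
/- Let q ≥ 2, let L_e ∈ ℝ^{q×q} be partitioned as [[L_{11}, L_{12}],[L_{21}, L_{22}]] with L_{22} ∈ ℝ a nonzero scalar (last diagonal entry), and let G_e ∈ ℝ^{q×r} be partitioned as [G_1; G_2] with G_2 its last row. Let Π^c = diag(π_1, …, π_q) be diagonal positive semidefinite and suppose L_eΠ^c + Π^c L_eᵀ − G_eG_eᵀ ⪰ 0. Define L̂_e = L_{11} − L_{12}L_{22}^{−1}L_{21}, Ĝ_e = G_1 − L_{12}L_{22}^{−1}G_2, and Π^c_1 = diag(π_1, …, π_{q−1}). Then L̂_eΠ^c_1 + Π^c_1 L̂_eᵀ − Ĝ_eĜ_eᵀ ⪰ 0; i.e., the truncated diagonal matrix Π^c_1 is a generalized edge controllability Gramian certificate for the one-step clustered (Schur-reduced) system. -/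
open Matrix

/-- truncation of a diagonal generalized edge controllability Gramian
certificate remains a certificate for the one-step clustered (Schur-reduced) system. -/
theorem truncated_controllability_certificate
    (q r : ℕ) (hq : 2 ≤ q)
    (Le : Matrix (Fin (q-1) ⊕ Fin 1) (Fin (q-1) ⊕ Fin 1) ℝ)
    (Ge : Matrix (Fin (q-1) ⊕ Fin 1) (Fin r) ℝ)
    -- the (2,2) entry of Le is a nonzero scalar
    (hL22 : Le (Sum.inr 0) (Sum.inr 0) ≠ 0)
    -- diagonal positive semidefinite Π^c satisfying the Gramian inequality
    (Pc : Matrix (Fin (q-1) ⊕ Fin 1) (Fin (q-1) ⊕ Fin 1) ℝ)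
    (hPcdiag : Pc.IsDiag) (hPcpsd : Pc.PosSemidef)
    (hPc : (Le * Pc + Pc * Leᵀ - Ge * Geᵀ).PosSemidef)
    -- the Schur-reduced data and the truncated certificate
    (Lhat : Matrix (Fin (q-1)) (Fin (q-1)) ℝ)
    (hLhat : Lhat = Le.toBlocks₁₁ - Le.toBlocks₁₂ * (Le.toBlocks₂₂)⁻¹ * Le.toBlocks₂₁)
    (Ghat : Matrix (Fin (q-1)) (Fin r) ℝ)
    (hGhat : Ghat = Ge.submatrix Sum.inl id
      - Le.toBlocks₁₂ * (Le.toBlocks₂₂)⁻¹ * Ge.submatrix Sum.inr id)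
    (Pc1 : Matrix (Fin (q-1)) (Fin (q-1)) ℝ)
    (hPc1 : Pc1 = Pc.toBlocks₁₁) :
    (Lhat * Pc1 + Pc1 * Lhatᵀ - Ghat * Ghatᵀ).PosSemidef := by
  set L11 := Le.toBlocks₁₁
  set L12 := Le.toBlocks₁₂
  set L21 := Le.toBlocks₂₁
  set L22 := Le.toBlocks₂₂
  set B : Matrix (Fin (q-1)) (Fin 1) ℝ := -(L12 * L22⁻¹) with hB
  set T : Matrix (Fin (q-1)) (Fin (q-1) ⊕ Fin 1) ℝ := fromCols 1 B with hT
  -- invertibility of the scalar block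
  have hdet : IsUnit L22.det := by
    rw [det_fin_one]
    exact isUnit_iff_ne_zero.mpr hL22
  have hinv : L22⁻¹ * L22 = 1 := nonsing_inv_mul _ hdet
  -- block decompositions
  have hLe : Le = fromBlocks L11 L12 L21 L22 := (fromBlocks_toBlocks Le).symm
  have hP12 : Pc.toBlocks₁₂ = 0 := by
    ext i j
    exact hPcdiag (by simp)
  have hP21 : Pc.toBlocks₂₁ = 0 := by
    ext i j
    exact hPcdiag (by simp)
  have hPcB : Pc = fromBlocks Pc.toBlocks₁₁ 0 0 Pc.toBlocks₂₂ := by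
    conv_lhs => rw [← fromBlocks_toBlocks Pc]
    rw [hP12, hP21]
  have hGe : Ge = fromRows (Ge.submatrix Sum.inl id) (Ge.submatrix Sum.inr id) := by
    ext (i | i) j <;> simp
  -- key products
  have hTL : T * Le = fromCols Lhat 0 := by
    rw [hT, hLe, fromCols_mul_fromBlocks, hLhat, hB]
    rw [fromCols_ext_iff]
    constructor
    · rw [Matrix.one_mul, Matrix.neg_mul, Matrix.mul_assoc, sub_eq_add_neg]
    · rw [Matrix.one_mul, Matrix.neg_mul, Matrix.mul_assoc, hinv, Matrix.mul_one, add_neg_cancel]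
  have hTG : T * Ge = Ghat := by
    rw [hT, hGe, fromCols_mul_fromRows, hGhat, hB]
    rw [Matrix.one_mul, Matrix.neg_mul, Matrix.mul_assoc, sub_eq_add_neg]
  have hTt : Tᵀ = fromRows 1 Bᵀ := by
    rw [hT, transpose_fromCols, transpose_one]
  have hPsym : Pcᵀ = Pc := hPcpsd.isHermitian.eq
  have h1 : T * (Le * Pc) * Tᵀ = Lhat * Pc1 := by
    rw [← Matrix.mul_assoc, hTL, hPcB, fromCols_mul_fromBlocks, hTt,
      fromCols_mul_fromRows, hPc1]
    simp [Matrix.mul_assoc]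
  have h2 : T * (Pc * Leᵀ) * Tᵀ = Pc1 * Lhatᵀ := by
    have : T * (Pc * Leᵀ) * Tᵀ = (T * (Le * Pcᵀ) * Tᵀ)ᵀ := by
      simp [Matrix.mul_assoc, Matrix.transpose_mul]
    have hP11 : Pc.toBlocks₁₁ᵀ = Pc.toBlocks₁₁ := by
      rw [show Pc.toBlocks₁₁ᵀ = Pcᵀ.toBlocks₁₁ from rfl, hPsym]
    rw [this, hPsym, h1, transpose_mul, hPc1, hP11]
  have h3 : T * (Ge * Geᵀ) * Tᵀ = Ghat * Ghatᵀ := by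
    rw [← Matrix.mul_assoc, hTG, Matrix.mul_assoc, ← transpose_mul, hTG]
  have key : Lhat * Pc1 + Pc1 * Lhatᵀ - Ghat * Ghatᵀ
      = T * (Le * Pc + Pc * Leᵀ - Ge * Geᵀ) * Tᵀ := by
    rw [Matrix.mul_sub, Matrix.mul_add, Matrix.sub_mul, Matrix.add_mul, h1, h2, h3]
  rw [key]
  have hTH : Tᵀ = Tᴴ := by
    ext i j
    simp [conjTranspose_apply]
  rw [hTH]
  exact hPc.mul_mul_conjTranspose_same T
end

section
/- Let q ≥ 2, let L_e ∈ ℝ^{q×q} be partitioned as [[L_{11}, L_{12}],[L_{21}, L_{22}]] with L_{22} ∈ ℝ a nonzero scalar (last diagonal entry), and let H_f ∈ ℝ^{p×q} be partitioned as [H_1, H_2] with H_2 its last column. Let Π^o = diag(π_1, …, π_q) be diagonal positive semidefinite and suppose L_eᵀΠ^o + Π^o L_e − H_fᵀH_f ⪰ 0. Define L̂_e = L_{11} − L_{12}L_{22}^{−1}L_{21}, Ĥ_f = H_1 − H_2 L_{22}^{−1} L_{21}, and Π^o_1 = diag(π_1, …, π_{q−1}). Then L̂_eᵀΠ^o_1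 + Π^o_1 L̂_e − Ĥ_fᵀĤ_f ⪰ 0; i.e., the truncated diagonal matrix Π^o_1 is a generalized edge observability Gramian certificate for the one-step clustered (Schur-reduced) system. -/
open Matrix

/-- truncation of a diagonal generalized edge observability Gramian
certificate remains a certificate for the one-step clustered (Schur-reduced) system. -/
theorem truncated_observability_certificate
    (q p : ℕ) (hq : 2 ≤ q)
    (Le : Matrix (Fin (q-1) ⊕ Fin 1) (Fin (q-1) ⊕ Fin 1) ℝ)
    (Hf : Matrix (Fin p) (Fin (q-1) ⊕ Fin 1) ℝ)
    -- the (2,2) entry of Le is a nonzero scalar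
    (hL22 : Le (Sum.inr 0) (Sum.inr 0) ≠ 0)
    -- diagonal positive semidefinite Π^o satisfying the Gramian inequality
    (Po : Matrix (Fin (q-1) ⊕ Fin 1) (Fin (q-1) ⊕ Fin 1) ℝ)
    (hPodiag : Po.IsDiag) (hPopsd : Po.PosSemidef)
    (hPo : (Leᵀ * Po + Po * Le - Hfᵀ * Hf).PosSemidef)
    -- the Schur-reduced data and the truncated certificate
    (Lhat : Matrix (Fin (q-1)) (Fin (q-1)) ℝ)
    (hLhat : Lhat = Le.toBlocks₁₁ - Le.toBlocks₁₂ * (Le.toBlocks₂₂)⁻¹ * Le.toBlocks₂₁)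
    (Hhat : Matrix (Fin p) (Fin (q-1)) ℝ)
    (hHhat : Hhat = Hf.submatrix id Sum.inl
      - Hf.submatrix id Sum.inr * (Le.toBlocks₂₂)⁻¹ * Le.toBlocks₂₁)
    (Po1 : Matrix (Fin (q-1)) (Fin (q-1)) ℝ)
    (hPo1 : Po1 = Po.toBlocks₁₁) :
    (Lhatᵀ * Po1 + Po1 * Lhat - Hhatᵀ * Hhat).PosSemidef := by
  -- the embedding matrix S = [I; -L22⁻¹ L21]
  set B : Matrix (Fin 1) (Fin (q-1)) ℝ := -((Le.toBlocks₂₂)⁻¹ * Le.toBlocks₂₁) with hB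
  set S : Matrix (Fin (q-1) ⊕ Fin 1) (Fin (q-1)) ℝ :=
    fromRows (1 : Matrix (Fin (q-1)) (Fin (q-1)) ℝ) B with hS
  -- L22 is invertible
  have hdet : (Le.toBlocks₂₂).det ≠ 0 := by
    rwa [Matrix.det_fin_one]
  have hinv : Le.toBlocks₂₂ * (Le.toBlocks₂₂)⁻¹ = 1 :=
    Matrix.mul_nonsing_inv _ (isUnit_iff_ne_zero.2 hdet)
  -- Le * S = [Lhat; 0]
  have hLeS : Le * S = fromRows Lhat 0 := by
    conv_lhs => rw [← fromBlocks_toBlocks Le]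
    rw [hS, fromBlocks_mul_fromRows, fromRows_ext_iff]
    constructor
    · rw [hLhat, hB, Matrix.mul_one, Matrix.mul_neg, ← Matrix.mul_assoc, ← sub_eq_add_neg]
    · rw [hB, Matrix.mul_neg, ← Matrix.mul_assoc, hinv, Matrix.one_mul,
        Matrix.mul_one, add_neg_cancel]
  -- Hf * S = Hhat
  have hHfS : Hf * S = Hhat := by
    conv_lhs => rw [← fromCols_toCols Hf]
    rw [hS, fromCols_mul_fromRows, hHhat, hB]
    show Hf.toCols₁ * 1 + Hf.toCols₂ * _ = _
    rw [Matrix.mul_one, Matrix.mul_neg, ← Matrix.mul_assoc]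
    rfl
  -- Po is block diagonal
  have hPo12 : Po.toBlocks₁₂ = 0 := by
    ext i j; exact hPodiag (by simp)
  have hPo21 : Po.toBlocks₂₁ = 0 := by
    ext i j; exact hPodiag (by simp)
  -- Po * Le * S = [Po1 * Lhat; 0]
  have hPoLeS : Po * (Le * S) = fromRows (Po1 * Lhat) 0 := by
    rw [hLeS]
    conv_lhs => rw [← fromBlocks_toBlocks Po]
    rw [fromBlocks_mul_fromRows, hPo21, hPo1]
    simp
  have hST : Sᵀ = fromCols (1 : Matrix (Fin (q-1)) (Fin (q-1)) ℝ) Bᵀ := by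
    rw [hS, transpose_fromRows, transpose_one]
  -- Sᵀ * (Po * Le) * S = Po1 * Lhat
  have hmid : Sᵀ * (Po * Le) * S = Po1 * Lhat := by
    rw [Matrix.mul_assoc, Matrix.mul_assoc, hPoLeS, hST, fromCols_mul_fromRows]
    simp
  -- symmetry facts
  have hPoSym : Poᵀ = Po := hPopsd.isHermitian.eq
  have hPo1Sym : Po1ᵀ = Po1 := by
    ext i j
    by_cases h : i = j
    · subst h; rfl
    · rw [transpose_apply, hPo1]
      have h1 : Po.toBlocks₁₁ j i = 0 := hPodiag (by simp [Ne, h, eq_comm])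
      have h2 : Po.toBlocks₁₁ i j = 0 := hPodiag (by simp [Ne, h])
      rw [h1, h2]
  have hmid2 : Sᵀ * (Leᵀ * Po) * S = Lhatᵀ * Po1 := by
    have : (Sᵀ * (Po * Le) * S)ᵀ = Sᵀ * (Leᵀ * Po) * S := by
      simp only [Matrix.transpose_mul, Matrix.transpose_transpose, hPoSym,
        Matrix.mul_assoc]
    rw [← this, hmid, Matrix.transpose_mul, hPo1Sym]
  have hH : Sᵀ * (Hfᵀ * Hf) * S = Hhatᵀ * Hhat := by
    rw [← hHfS, Matrix.transpose_mul]
    simp only [Matrix.mul_assoc]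
  -- conjTranspose = transpose over ℝ
  have hSconj : Sᴴ = Sᵀ := by
    ext i j
    simp only [conjTranspose_apply, transpose_apply, star_trivial]
  have key : Sᴴ * (Leᵀ * Po + Po * Le - Hfᵀ * Hf) * S
      = Lhatᵀ * Po1 + Po1 * Lhat - Hhatᵀ * Hhat := by
    rw [hSconj, ← hmid, ← hmid2, ← hH, sub_eq_add_neg, sub_eq_add_neg,
      Matrix.mul_add, Matrix.mul_add, Matrix.add_mul, Matrix.add_mul,
      Matrix.mul_neg, Matrix.neg_mul]
  rw [← key]
  exact hPo.conjTranspose_mul_mul_same S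
end
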